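/- arXiv:2206.10246 — 6 statements merged into one kernel-verified Lean document; each statement's English description precedes it below -/
import Mathlib

section
/- Let q ≥ 1 be an integer, e(u) = exp(-1/(q u)) for u > 0, r ∈ (0,1), and A, B real with -1 < A < 0. Define L̃(X) = ∫₀^r u^{A + B X} (1 - e(u)^X) du for small X > 0. Then lim_{X → 0⁺} X^{-A-1} L̃(X) = ∫₀^∞ v^A (1 - e(v)) dv, where the improper integral on the right converges. -/
open MeasureTheory Set Filter


lemma f0_bounds (q : ℕ) (hq : 1 ≤ q) (v : ℝ) (hv : 0 < v) :
    0 ≤ 1 - Real.exp (-1 / (q * v)) ∧ 1 - Real.exp (-1 / (q * v)) ≤ 1 ∧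
    1 - Real.exp (-1 / (q * v)) ≤ 1 / (q * v) := by
  have hqv : 0 < (q : ℝ) * v := by positivity
  have hneg : -1 / ((q:ℝ) * v) = -(1/((q:ℝ)*v)) := by ring
  refine ⟨?_, ?_, ?_⟩
  · have : Real.exp (-1 / (q * v)) ≤ 1 := by
      rw [Real.exp_le_one_iff, hneg, neg_nonpos]
      positivity
    linarith
  · have := Real.exp_pos (-1 / (q * v)); linarith
  · have h := Real.add_one_le_exp (-(1 / ((q:ℝ)*v)))
    rw [hneg]; linarith

lemma f0_meas (q : ℕ) (c : ℝ) :
    Measurable (fun v : ℝ => v ^ c * (1 - Real.exp (-1 / (q * v)))) := by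
  fun_prop

lemma aux_integrable (q : ℕ) (hq : 1 ≤ q) (c : ℝ) (hc1 : -1 < c) (hc2 : c < 0) :
    IntegrableOn (fun v : ℝ => v ^ c * (1 - Real.exp (-1 / (q * v)))) (Ioi 0) volume := by
  have hmeas : AEStronglyMeasurable (fun v : ℝ => v ^ c * (1 - Real.exp (-1 / (q * v)))) volume :=
    (f0_meas q c).aestronglyMeasurable
  have h1 : IntegrableOn (fun v : ℝ => v ^ c * (1 - Real.exp (-1 / (q * v)))) (Ioc 0 1) volume := by
    have hint : IntegrableOn (fun v : ℝ => v ^ c) (Ioc (0:ℝ) 1) volume :=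
      (intervalIntegral.intervalIntegrable_rpow' hc1).1
    refine Integrable.mono' hint (hmeas.restrict) ?_
    filter_upwards [ae_restrict_mem measurableSet_Ioc] with v hv
    obtain ⟨h0, h1', _⟩ := f0_bounds q hq v hv.1
    have hvc : (0:ℝ) ≤ v ^ c := Real.rpow_nonneg hv.1.le c
    rw [Real.norm_eq_abs, abs_of_nonneg (by positivity)]
    nlinarith
  have h2 : IntegrableOn (fun v : ℝ => v ^ c * (1 - Real.exp (-1 / (q * v)))) (Ioi 1) volume := by
    have hint : IntegrableOn (fun v : ℝ => (q:ℝ)⁻¹ * v ^ (c-1)) (Ioi (1:ℝ)) volume := by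
      have : IntegrableOn (fun v : ℝ => v ^ (c-1)) (Ioi (1:ℝ)) volume := by
        rw [integrableOn_Ioi_rpow_iff zero_lt_one]; linarith
      exact this.const_mul _
    refine Integrable.mono' hint (hmeas.restrict) ?_
    filter_upwards [ae_restrict_mem measurableSet_Ioi] with v hv
    have hv0 : (0:ℝ) < v := lt_trans zero_lt_one hv
    obtain ⟨h0, _, h2'⟩ := f0_bounds q hq v hv0
    have hvc : (0:ℝ) ≤ v ^ c := Real.rpow_nonneg hv0.le c
    rw [Real.norm_eq_abs, abs_of_nonneg (by positivity)]
    calc v ^ c * (1 - Real.exp (-1 / (q * v))) ≤ v ^ c * (1 / (q * v)) := by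
          exact mul_le_mul_of_nonneg_left h2' hvc
      _ = (q:ℝ)⁻¹ * v ^ (c-1) := by
          rw [Real.rpow_sub hv0, Real.rpow_one]
          field_simp
  have : Ioi (0:ℝ) = Ioc 0 1 ∪ Ioi 1 := by
    rw [Ioc_union_Ioi_eq_Ioi]; norm_num
  rw [this]
  exact h1.union h2

lemma eq_key (q : ℕ) (hq : 1 ≤ q) (r : ℝ) (hr : 0 < r) (A B : ℝ) (X : ℝ) (hX : 0 < X) :
    X ^ (-A - 1) * ∫ u in Ioo (0 : ℝ) r, u ^ (A + B * X) * (1 - Real.exp (-1 / (q * u)) ^ X)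
    = X ^ (B * X) * ∫ v in Ioo (0 : ℝ) (r / X), v ^ (A + B * X) * (1 - Real.exp (-1 / (q * v))) := by
  have hq0 : ((q:ℝ)) ≠ 0 := by positivity
  have hX0 : X ≠ 0 := hX.ne'
  set c := A + B * X with hc
  have h1 : (∫ u in Ioo (0 : ℝ) r, u ^ c * (1 - Real.exp (-1 / (q * u)) ^ X))
      = ∫ u in (0:ℝ)..r, u ^ c * (1 - Real.exp (-1 / (q * u)) ^ X) := by
    rw [intervalIntegral.integral_of_le hr.le, integral_Ioc_eq_integral_Ioo]
  have h2 : (∫ x in (0:ℝ)..(r/X), (fun u => u ^ c * (1 - Real.exp (-1 / (q * u)) ^ X)) (X * x))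
      = X⁻¹ • ∫ u in (0:ℝ)..r, u ^ c * (1 - Real.exp (-1 / (q * u)) ^ X) := by
    have := intervalIntegral.integral_comp_mul_left (a := 0) (b := r / X)
      (fun u => u ^ c * (1 - Real.exp (-1 / (q * u)) ^ X)) hX0
    rw [mul_zero, mul_div_cancel₀ _ hX0] at this
    exact this
  have h3 : (∫ x in (0:ℝ)..(r/X), (fun u => u ^ c * (1 - Real.exp (-1 / (q * u)) ^ X)) (X * x))
      = X ^ c * ∫ v in Ioo (0 : ℝ) (r / X), v ^ c * (1 - Real.exp (-1 / (q * v))) := by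
    rw [intervalIntegral.integral_of_le (by positivity : (0:ℝ) ≤ r / X),
      integral_Ioc_eq_integral_Ioo, ← integral_const_mul]
    refine setIntegral_congr_fun measurableSet_Ioo (fun x hx => ?_)
    have hx0 : 0 < x := hx.1
    have hexp : Real.exp (-1 / (q * (X * x))) ^ X = Real.exp (-1 / (q * x)) := by
      rw [← Real.exp_mul]
      congr 1
      field_simp
    simp only [hexp]
    rw [Real.mul_rpow hX.le hx0.le]
    ring
  have h4 : (∫ u in Ioo (0 : ℝ) r, u ^ c * (1 - Real.exp (-1 / (q * u)) ^ X))
      = X * (X ^ c * ∫ v in Ioo (0 : ℝ) (r / X), v ^ c * (1 - Real.exp (-1 / (q * v)))) := by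
    rw [h1, ← h3, h2, smul_eq_mul] at *
    rw [h3]
    field_simp
  rw [h4]
  have : X ^ (-A - 1) * (X * (X ^ c * ∫ v in Ioo (0 : ℝ) (r / X), v ^ c * (1 - Real.exp (-1 / (q * v)))))
      = (X ^ (-A-1) * X ^ (1:ℝ) * X ^ c) * ∫ v in Ioo (0 : ℝ) (r / X), v ^ c * (1 - Real.exp (-1 / (q * v))) := by
    rw [Real.rpow_one]; ring
  rw [this, ← Real.rpow_add hX, ← Real.rpow_add hX]
  congr 2
  rw [hc]; ring

-- X^{B X} → 1 as X → 0+
lemma rpow_mul_self_tendsto_one (B : ℝ) :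
    Tendsto (fun X : ℝ => X ^ (B * X)) (nhdsWithin 0 (Ioi 0)) (nhds 1) := by
  have h0 : Tendsto (fun X : ℝ => B * (Real.log X * X ^ (1:ℝ))) (nhdsWithin 0 (Ioi 0)) (nhds 0) := by
    have := (tendsto_log_mul_rpow_nhdsGT_zero zero_lt_one).const_mul B
    simpa using this
  have h1 : Tendsto (fun X : ℝ => Real.exp (B * (Real.log X * X ^ (1:ℝ))))
      (nhdsWithin 0 (Ioi 0)) (nhds 1) := by
    simpa [Function.comp_def] using (Real.continuous_exp.tendsto 0).comp h0
  refine h1.congr' ?_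
  filter_upwards [self_mem_nhdsWithin] with X (hX : 0 < X)
  rw [Real.rpow_one, Real.rpow_def_of_pos hX]
  ring_nf

/-- For `-1 < A < 0`, `L̃(X) = ∫₀^r u^{A+BX} (1 - e(u)^X) du` with
`e(u) = exp(-1/(q u))` satisfies
`lim_{X → 0⁺} X^{-A-1} L̃(X) = ∫₀^∞ v^A (1 - e(v)) dv`, which converges. -/
theorem stmt6 (q : ℕ) (hq : 1 ≤ q) (r : ℝ) (hr : r ∈ Ioo (0 : ℝ) 1) (A B : ℝ)
    (hA : -1 < A) (hA' : A < 0) :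
    IntegrableOn (fun v : ℝ => v ^ A * (1 - Real.exp (-1 / (q * v)))) (Ioi 0) volume ∧
    Tendsto
      (fun X : ℝ => X ^ (-A - 1) *
        ∫ u in Ioo (0 : ℝ) r, u ^ (A + B * X) * (1 - Real.exp (-1 / (q * u)) ^ X))
      (nhdsWithin 0 (Ioi 0))
      (nhds (∫ v in Ioi (0 : ℝ), v ^ A * (1 - Real.exp (-1 / (q * v))))) := by
  refine ⟨aux_integrable q hq A hA hA', ?_⟩
  set f0 : ℝ → ℝ := fun v => 1 - Real.exp (-1 / (q * v)) with hf0
  set ε : ℝ := min ((A+1)/2) (-A/2) with hε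
  have hε0 : 0 < ε := by
    apply lt_min <;> linarith
  have ha1 : -1 < A - ε := by
    have : ε ≤ (A+1)/2 := min_le_left _ _
    linarith
  have ha2 : A - ε < 0 := by linarith
  have hb1 : -1 < A + ε := by linarith
  have hb2 : A + ε < 0 := by
    have : ε ≤ -A/2 := min_le_right _ _
    linarith
  set δ : ℝ := ε / (|B| + 1) with hδ
  have hδ0 : 0 < δ := by positivity
  set F : ℝ → ℝ → ℝ := fun X v => (Ioo (0:ℝ) (r/X)).indicator
    (fun v => v ^ (A + B * X) * f0 v) v with hF
  -- DCT
  have hDCT : Tendsto (fun X : ℝ => ∫ v in Ioi (0:ℝ), F X v)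
      (nhdsWithin 0 (Ioi 0))
      (nhds (∫ v in Ioi (0 : ℝ), v ^ A * f0 v)) := by
    refine tendsto_integral_filter_of_dominated_convergence
      (fun v => v ^ (A - ε) * f0 v + v ^ (A + ε) * f0 v) ?_ ?_ ?_ ?_
    · filter_upwards with X
      exact (((f0_meas q (A + B * X)).indicator measurableSet_Ioo).aestronglyMeasurable).restrict
    · filter_upwards [Ioo_mem_nhdsGT_of_mem ⟨le_refl 0, hδ0⟩] with X hX
      filter_upwards [ae_restrict_mem measurableSet_Ioi] with v hv
      have hv0 : (0:ℝ) < v := hv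
      have hBX : |B * X| ≤ ε := by
        rw [abs_mul, abs_of_pos hX.1]
        have h1 : |B| * X ≤ |B| * δ := by
          apply mul_le_mul_of_nonneg_left hX.2.le (abs_nonneg B)
        have h2 : |B| * δ ≤ ε := by
          rw [hδ]
          calc |B| * (ε / (|B| + 1)) ≤ (|B| + 1) * (ε / (|B| + 1)) := by
                apply mul_le_mul_of_nonneg_right (by linarith) (by positivity)
            _ = ε := by field_simp
        linarith
      have hexp1 : A - ε ≤ A + B * X := by
        have := neg_abs_le (B * X); linarith
      have hexp2 : A + B * X ≤ A + ε := by
        have := le_abs_self (B * X); linarith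
      obtain ⟨hf00, hf01, _⟩ := f0_bounds q hq v hv0
      have key : v ^ (A + B * X) ≤ v ^ (A - ε) + v ^ (A + ε) := by
        rcases le_total v 1 with hv1 | hv1
        · have := Real.rpow_le_rpow_of_exponent_ge hv0 hv1 hexp1
          have := Real.rpow_nonneg hv0.le (A + ε)
          linarith
        · have := Real.rpow_le_rpow_of_exponent_le hv1 hexp2
          have := Real.rpow_nonneg hv0.le (A - ε)
          linarith
      calc ‖F X v‖ ≤ ‖v ^ (A + B * X) * f0 v‖ := norm_indicator_le_norm_self _ _
        _ = v ^ (A + B * X) * f0 v := by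
            rw [Real.norm_eq_abs, abs_of_nonneg]
            positivity
        _ ≤ (v ^ (A - ε) + v ^ (A + ε)) * f0 v := mul_le_mul_of_nonneg_right key hf00
        _ = v ^ (A - ε) * f0 v + v ^ (A + ε) * f0 v := by ring
    · have h1 := aux_integrable q hq (A - ε) ha1 ha2
      have h2 := aux_integrable q hq (A + ε) hb1 hb2
      exact h1.add h2
    · filter_upwards [ae_restrict_mem measurableSet_Ioi] with v hv
      have hv0 : (0:ℝ) < v := hv
      have hrv : 0 < r / v := div_pos hr.1 hv0
      have hmem : ∀ᶠ X in nhdsWithin (0:ℝ) (Ioi 0), F X v = v ^ (A + B * X) * f0 v := by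
        filter_upwards [Ioo_mem_nhdsGT_of_mem ⟨le_refl 0, hrv⟩]
          with X hX
        apply indicator_of_mem
        exact ⟨hv0, (lt_div_iff₀ hX.1).mpr (by rw [mul_comm]; exact (lt_div_iff₀ hv0).mp hX.2)⟩
      have htend : Tendsto (fun X : ℝ => v ^ (A + B * X) * f0 v)
          (nhdsWithin 0 (Ioi 0)) (nhds (v ^ A * f0 v)) := by
        have hAB : Tendsto (fun X : ℝ => A + B * X) (nhdsWithin (0:ℝ) (Ioi 0)) (nhds A) := by
          have : Tendsto (fun X : ℝ => A + B * X) (nhds 0) (nhds (A + B * 0)) := by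
            exact (continuous_const.add (continuous_const.mul continuous_id)).tendsto 0
          simpa using this.mono_left nhdsWithin_le_nhds
        exact ((tendsto_const_nhds.rpow hAB (Or.inl hv0.ne'))).mul tendsto_const_nhds
      exact htend.congr' (hmem.mono fun X h => h.symm)
  have hmain : Tendsto (fun X : ℝ => X ^ (B * X) * ∫ v in Ioi (0:ℝ), F X v)
      (nhdsWithin 0 (Ioi 0))
      (nhds (∫ v in Ioi (0 : ℝ), v ^ A * f0 v)) := by
    have := (rpow_mul_self_tendsto_one B).mul hDCT
    simpa using this
  refine hmain.congr' ?_
  filter_upwards [self_mem_nhdsWithin] with X (hX : 0 < X)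
  have hind : (∫ v in Ioi (0:ℝ), F X v)
      = ∫ v in Ioo (0:ℝ) (r/X), v ^ (A + B * X) * f0 v := by
    rw [hF]
    rw [integral_indicator measurableSet_Ioo, Measure.restrict_restrict measurableSet_Ioo,
      inter_eq_left.mpr (fun x hx => hx.1)]
  rw [hind, ← eq_key q hq r hr.1 A B X hX]
end

section
/- Let q ≥ 1 be an integer, e(u) = exp(-1/(q u)) for u > 0, r ∈ (0,1), B ∈ ℝ. Define L̃(X) = ∫₀^r u^{B X} (1 - e(u)^X) du for small X > 0. Then lim_{X → 0⁺} X^{-1} |log X|^{-1} L̃(X) = 1/q. -/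
open MeasureTheory Set Filter

open intervalIntegral Topology

private lemma aux_one_sub_exp_le (t : ℝ) : 1 - Real.exp (-t) ≤ t := by
  linarith [Real.add_one_le_exp (-t)]

private lemma aux_le_one_sub_exp {t : ℝ} (ht : 0 ≤ t) : t - t ^ 2 ≤ 1 - Real.exp (-t) := by
  have h1 : t + 1 ≤ Real.exp t := Real.add_one_le_exp t
  have h2 : Real.exp (-t) * Real.exp t = 1 := by
    rw [← Real.exp_add]; simp
  nlinarith [Real.exp_pos (-t), Real.exp_pos t, sq_nonneg t,
    mul_le_mul_of_nonneg_left h1 (Real.exp_pos (-t)).le]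

private lemma aux_bounds (q : ℕ) (hq : 1 ≤ q) {r B X : ℝ} (hr0 : 0 < r)
    (hX0 : 0 < X) (hXr : X < r) (hBX : -1 < B * X) :
    Real.exp (min (B * X * Real.log X) (B * X * Real.log r)) * (X / q) *
        (Real.log r - Real.log X)
      - Real.exp (max (B * X * Real.log X) (B * X * Real.log r)) * (X / q) ^ 2 * (X⁻¹ - r⁻¹)
      ≤ (∫ u in Ioo (0 : ℝ) r, u ^ (B * X) * (1 - Real.exp (-1 / (q * u)) ^ X))
    ∧ (∫ u in Ioo (0 : ℝ) r, u ^ (B * X) * (1 - Real.exp (-1 / (q * u)) ^ X))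
      ≤ X ^ (B * X + 1) / (B * X + 1)
        + Real.exp (max (B * X * Real.log X) (B * X * Real.log r)) * (X / q) *
            (Real.log r - Real.log X) := by
  have hq0 : (0 : ℝ) < q := by exact_mod_cast hq
  have hq1 : (1 : ℝ) ≤ q := by exact_mod_cast hq
  set f : ℝ → ℝ := fun u => u ^ (B * X) * (1 - Real.exp (-1 / (q * u)) ^ X) with hf
  set lo : ℝ := Real.exp (min (B * X * Real.log X) (B * X * Real.log r)) with hlo
  set hi : ℝ := Real.exp (max (B * X * Real.log X) (B * X * Real.log r)) with hhi
  -- basic pointwise facts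
  have hexp_eq : ∀ u : ℝ, 0 < u →
      Real.exp (-1 / ((q : ℝ) * u)) ^ X = Real.exp (-(X / (q * u))) := by
    intro u hu
    rw [← Real.exp_mul]
    congr 1
    field_simp
  have hs_nonneg : ∀ u : ℝ, 0 ≤ Real.exp (-1 / ((q : ℝ) * u)) ^ X :=
    fun u => Real.rpow_nonneg (Real.exp_pos _).le _
  have hs_le_one : ∀ u : ℝ, 0 ≤ u → Real.exp (-1 / ((q : ℝ) * u)) ^ X ≤ 1 := by
    intro u hu
    rcases eq_or_lt_of_le hu with h | h
    · simp [← h]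
    · rw [hexp_eq u h]
      rw [Real.exp_le_one_iff]
      have : 0 ≤ X / (q * u) := by positivity
      linarith
  have hf_nonneg : ∀ u : ℝ, 0 ≤ u → 0 ≤ f u := by
    intro u hu
    apply mul_nonneg (Real.rpow_nonneg hu _)
    linarith [hs_le_one u hu]
  -- bounds on u ^ (B*X) for u ∈ Icc X r
  have hrpow_le : ∀ u ∈ Icc X r, u ^ (B * X) ≤ hi := by
    intro u hu
    have hu0 : 0 < u := lt_of_lt_of_le hX0 hu.1
    rw [Real.rpow_def_of_pos hu0, hhi, Real.exp_le_exp, mul_comm]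
    rcases le_or_gt 0 (B * X) with hb | hb
    · exact le_max_of_le_right (mul_le_mul_of_nonneg_left (Real.log_le_log hu0 hu.2) hb)
    · exact le_max_of_le_left (mul_le_mul_of_nonpos_left (Real.log_le_log hX0 hu.1) hb.le)
  have hrpow_ge : ∀ u ∈ Icc X r, lo ≤ u ^ (B * X) := by
    intro u hu
    have hu0 : 0 < u := lt_of_lt_of_le hX0 hu.1
    rw [Real.rpow_def_of_pos hu0, hlo, Real.exp_le_exp, mul_comm (Real.log u)]
    rcases le_or_gt 0 (B * X) with hb | hb
    · exact min_le_of_left_le (mul_le_mul_of_nonneg_left (Real.log_le_log hX0 hu.1) hb)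
    · exact min_le_of_right_le (mul_le_mul_of_nonpos_left (Real.log_le_log hu0 hu.2) hb.le)
  have hlo_pos : 0 < lo := Real.exp_pos _
  have hhi_pos : 0 < hi := Real.exp_pos _
  have hlohi : lo ≤ hi := Real.exp_le_exp.mpr min_le_max
  -- measurability
  have hfm : Measurable f := by rw [hf]; fun_prop
  -- integrability on [0, X]
  have hrpow_int : IntervalIntegrable (fun u : ℝ => u ^ (B * X)) volume 0 X :=
    intervalIntegral.intervalIntegrable_rpow' hBX
  have hf_le : ∀ u : ℝ, 0 ≤ u → f u ≤ u ^ (B * X) := by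
    intro u hu
    calc f u ≤ u ^ (B * X) * 1 := by
              apply mul_le_mul_of_nonneg_left _ (Real.rpow_nonneg hu _)
              linarith [hs_nonneg u]
      _ = u ^ (B * X) := mul_one _
  have h1 : IntervalIntegrable f volume 0 X := by
    apply hrpow_int.mono_fun hfm.aestronglyMeasurable.restrict
    rw [uIoc_of_le hX0.le]
    refine (ae_restrict_iff' measurableSet_Ioc).mpr (Filter.Eventually.of_forall fun u hu => ?_)
    have hu0 : 0 < u := hu.1
    simp only [Real.norm_eq_abs]
    rw [abs_of_nonneg (hf_nonneg u hu0.le), abs_of_nonneg (Real.rpow_nonneg hu0.le _)]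
    exact hf_le u hu0.le
  -- integrability on [X, r]
  have hcont : ContinuousOn f (Icc X r) := by
    rw [hf]
    apply ContinuousOn.mul
    · exact fun u hu => (Real.continuousAt_rpow_const u _
        (Or.inl (lt_of_lt_of_le hX0 hu.1).ne')).continuousWithinAt
    · apply ContinuousOn.sub continuousOn_const
      intro u hu
      have hu0 : 0 < u := lt_of_lt_of_le hX0 hu.1
      apply ContinuousWithinAt.rpow_const
      · exact (Real.continuous_exp.continuousAt.comp
          ((continuousAt_const.div (continuousAt_const.mul continuousAt_id)
            (by exact (mul_pos hq0 hu0).ne')))).continuousWithinAt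
      · exact Or.inl (Real.exp_pos _).ne'
  have h2 : IntervalIntegrable f volume X r := by
    apply ContinuousOn.intervalIntegrable
    rwa [uIcc_of_le hXr.le]
  -- splitting of the integral
  have hsplit : (∫ u in Ioo (0 : ℝ) r, f u)
      = (∫ u in (0:ℝ)..X, f u) + ∫ u in X..r, f u := by
    rw [intervalIntegral.integral_add_adjacent_intervals h1 h2,
      intervalIntegral.integral_of_le hr0.le, integral_Ioc_eq_integral_Ioo]
  -- upper bound on the first piece
  have hup1 : (∫ u in (0:ℝ)..X, f u) ≤ X ^ (B * X + 1) / (B * X + 1) := by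
    have := intervalIntegral.integral_mono_on hX0.le h1 hrpow_int
      (fun u hu => hf_le u hu.1)
    rwa [integral_rpow (Or.inl hBX),
      Real.zero_rpow (by linarith : B * X + 1 ≠ 0), sub_zero] at this
  have hlow1 : 0 ≤ ∫ u in (0:ℝ)..X, f u := by
    apply intervalIntegral.integral_nonneg hX0.le
    exact fun u hu => hf_nonneg u hu.1
  -- integrable comparison functions on [X, r]
  have hinv_cont : ContinuousOn (fun u : ℝ => u⁻¹) (Icc X r) :=
    continuousOn_id.inv₀ fun u hu => (lt_of_lt_of_le hX0 hu.1).ne'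
  have hinv2_cont : ContinuousOn (fun u : ℝ => u ^ (-2 : ℝ)) (Icc X r) :=
    fun u hu => (Real.continuousAt_rpow_const u _
      (Or.inl (lt_of_lt_of_le hX0 hu.1).ne')).continuousWithinAt
  have hub_int : IntervalIntegrable (fun u : ℝ => hi * (X / q) * u⁻¹) volume X r := by
    apply ContinuousOn.intervalIntegrable
    rw [uIcc_of_le hXr.le]
    exact continuousOn_const.mul hinv_cont
  have hlb_int : IntervalIntegrable
      (fun u : ℝ => lo * (X / q) * u⁻¹ - hi * (X / q) ^ 2 * u ^ (-2 : ℝ)) volume X r := by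
    apply ContinuousOn.intervalIntegrable
    rw [uIcc_of_le hXr.le]
    exact (continuousOn_const.mul hinv_cont).sub (continuousOn_const.mul hinv2_cont)
  -- upper bound on the second piece
  have hup2 : (∫ u in X..r, f u) ≤ hi * (X / q) * (Real.log r - Real.log X) := by
    have hmono := intervalIntegral.integral_mono_on hXr.le h2 hub_int ?_
    · rwa [intervalIntegral.integral_const_mul, integral_inv_of_pos hX0 hr0,
        Real.log_div hr0.ne' hX0.ne'] at hmono
    · intro u hu
      have hu0 : 0 < u := lt_of_lt_of_le hX0 hu.1
      have ht : 1 - Real.exp (-(X / (q * u))) ≤ X / (q * u) := aux_one_sub_exp_le _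
      have hnn : 0 ≤ 1 - Real.exp (-(X / (q * u))) := by
        rw [← hexp_eq u hu0]; linarith [hs_le_one u hu0.le]
      calc f u = u ^ (B * X) * (1 - Real.exp (-(X / (q * u)))) := by
            simp only [hf]; rw [hexp_eq u hu0]
        _ ≤ hi * (X / (q * u)) := mul_le_mul (hrpow_le u hu) ht hnn hhi_pos.le
        _ = hi * (X / q) * u⁻¹ := by rw [mul_assoc, ← div_div, div_eq_mul_inv (X / (q:ℝ))]
  -- lower bound on the second piece
  have hlow2 : lo * (X / q) * (Real.log r - Real.log X) - hi * (X / q) ^ 2 * (X⁻¹ - r⁻¹)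
      ≤ ∫ u in X..r, f u := by
    have hA : IntervalIntegrable (fun u : ℝ => lo * (X / q) * u⁻¹) volume X r := by
      apply ContinuousOn.intervalIntegrable
      rw [uIcc_of_le hXr.le]
      exact continuousOn_const.mul hinv_cont
    have hB : IntervalIntegrable (fun u : ℝ => hi * (X / q) ^ 2 * u ^ (-2 : ℝ)) volume X r := by
      apply ContinuousOn.intervalIntegrable
      rw [uIcc_of_le hXr.le]
      exact continuousOn_const.mul hinv2_cont
    have hval : (∫ u in X..r, (lo * (X / q) * u⁻¹ - hi * (X / q) ^ 2 * u ^ (-2 : ℝ)))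
        = lo * (X / q) * (Real.log r - Real.log X) - hi * (X / q) ^ 2 * (X⁻¹ - r⁻¹) := by
      rw [intervalIntegral.integral_sub hA hB, intervalIntegral.integral_const_mul,
        intervalIntegral.integral_const_mul, integral_inv_of_pos hX0 hr0,
        Real.log_div hr0.ne' hX0.ne',
        integral_rpow (r := -2) (Or.inr ⟨by norm_num, notMem_uIcc_of_lt hX0 hr0⟩)]
      rw [show (-2 : ℝ) + 1 = -1 by norm_num, Real.rpow_neg_one, Real.rpow_neg_one]
      ring
    have hmono := intervalIntegral.integral_mono_on hXr.le hlb_int h2 ?_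
    · rw [hval] at hmono; exact hmono
    · intro u hu
      have hu0 : 0 < u := lt_of_lt_of_le hX0 hu.1
      have hqu : 0 < (q : ℝ) * u := by positivity
      have ht0 : 0 ≤ X / (q * u) := by positivity
      have ht1 : X / ((q : ℝ) * u) ≤ 1 := by
        rw [div_le_one hqu]
        calc X ≤ u := hu.1
          _ = 1 * u := (one_mul u).symm
          _ ≤ (q : ℝ) * u := by
              apply mul_le_mul_of_nonneg_right hq1 hu0.le
      have e1 : X / ((q : ℝ) * u) = X / q * u⁻¹ := by
        rw [mul_assoc] at *
        rw [← div_div, div_eq_mul_inv (X / (q:ℝ))]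
      have e2 : (X / ((q : ℝ) * u)) ^ 2 = (X / q) ^ 2 * u ^ (-2 : ℝ) := by
        rw [show (-2 : ℝ) = -((2:ℕ) : ℝ) by norm_num, Real.rpow_neg hu0.le,
          Real.rpow_natCast]
        field_simp
      have h3 : X / (q * u) - (X / (q * u)) ^ 2 ≤ 1 - Real.exp (-(X / (q * u))) :=
        aux_le_one_sub_exp ht0
      have h4 : 0 ≤ X / (q * u) - (X / (q * u)) ^ 2 := by nlinarith
      have h5 : lo * (X / (q * u) - (X / (q * u)) ^ 2)
          ≤ u ^ (B * X) * (1 - Real.exp (-(X / (q * u)))) :=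
        mul_le_mul (hrpow_ge u hu) h3 h4 (Real.rpow_nonneg hu0.le _)
      have hfu : f u = u ^ (B * X) * (1 - Real.exp (-(X / (q * u)))) := by
        simp only [hf]; rw [hexp_eq u hu0]
      have h6 : hi * (X / (q * u)) ^ 2 ≥ lo * (X / (q * u)) ^ 2 :=
        mul_le_mul_of_nonneg_right hlohi (sq_nonneg _)
      rw [mul_assoc lo, ← e1, mul_assoc hi, ← e2, hfu]
      nlinarith [h5]
  constructor
  · rw [hsplit]; linarith [hlow1, hlow2]
  · rw [hsplit]; linarith [hup1, hup2]

set_option maxHeartbeats 1000000 in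
/-- Critical case `A = 0`: for `L̃(X) = ∫₀^r u^{BX} (1 - e(u)^X) du` with
`e(u) = exp(-1/(q u))`, one has `lim_{X → 0⁺} X⁻¹ |log X|⁻¹ L̃(X) = 1/q`. -/
theorem stmt7 (q : ℕ) (hq : 1 ≤ q) (r : ℝ) (hr : r ∈ Ioo (0 : ℝ) 1) (B : ℝ) :
    Tendsto
      (fun X : ℝ => X⁻¹ * |Real.log X|⁻¹ *
        ∫ u in Ioo (0 : ℝ) r, u ^ (B * X) * (1 - Real.exp (-1 / (q * u)) ^ X))
      (nhdsWithin 0 (Ioi 0)) (nhds (1 / q)) := by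
  obtain ⟨hr0, hr1⟩ := hr
  have hq0 : (0 : ℝ) < q := by exact_mod_cast hq
  -- limit facts
  have hXlogX : Tendsto (fun X : ℝ => X * Real.log X) (𝓝[>] 0) (𝓝 0) := by
    have h := tendsto_log_mul_rpow_nhdsGT_zero (r := 1) zero_lt_one
    simp only [Real.rpow_one] at h
    exact h.congr fun X => mul_comm _ _
  have hBXlogX : Tendsto (fun X : ℝ => B * X * Real.log X) (𝓝[>] 0) (𝓝 0) := by
    have h := hXlogX.const_mul B
    rw [mul_zero] at h
    exact h.congr fun X => by ring
  have hBXlogr : Tendsto (fun X : ℝ => B * X * Real.log r) (𝓝[>] 0) (𝓝 0) := by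
    have hc : Continuous fun X : ℝ => B * X * Real.log r := by continuity
    have h : Tendsto (fun X : ℝ => B * X * Real.log r) (𝓝[>] 0) (𝓝 (B * 0 * Real.log r)) :=
      (hc.tendsto 0).mono_left nhdsWithin_le_nhds
    simpa using h
  have hhi : Tendsto (fun X : ℝ => Real.exp (max (B * X * Real.log X) (B * X * Real.log r)))
      (𝓝[>] 0) (𝓝 1) := by
    have hmax := hBXlogX.max hBXlogr
    rw [max_self] at hmax
    have h := (Real.continuous_exp.tendsto 0).comp hmax
    simpa [Function.comp_def] using h
  have hlo : Tendsto (fun X : ℝ => Real.exp (min (B * X * Real.log X) (B * X * Real.log r)))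
      (𝓝[>] 0) (𝓝 1) := by
    have hmin := hBXlogX.min hBXlogr
    rw [min_self] at hmin
    have h := (Real.continuous_exp.tendsto 0).comp hmin
    simpa [Function.comp_def] using h
  have hneglog : Tendsto (fun X : ℝ => -Real.log X) (𝓝[>] 0) atTop :=
    tendsto_neg_atBot_atTop.comp Real.tendsto_log_nhdsGT_zero
  have hinv : Tendsto (fun X : ℝ => (-Real.log X)⁻¹) (𝓝[>] 0) (𝓝 0) :=
    hneglog.inv_tendsto_atTop
  have hXBX : Tendsto (fun X : ℝ => X ^ (B * X)) (𝓝[>] 0) (𝓝 1) := by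
    have h := (Real.continuous_exp.tendsto 0).comp hBXlogX
    rw [Real.exp_zero] at h
    apply h.congr'
    filter_upwards [self_mem_nhdsWithin] with X hX
    rw [Real.rpow_def_of_pos hX]
    simp only [Function.comp_apply]
    congr 1
    ring
  have hBX1 : Tendsto (fun X : ℝ => (B * X + 1)⁻¹) (𝓝[>] 0) (𝓝 1) := by
    have hc : Continuous fun X : ℝ => B * X + 1 := by continuity
    have h0 : Tendsto (fun X : ℝ => B * X + 1) (𝓝[>] 0) (𝓝 (B * 0 + 1)) :=
      (hc.tendsto 0).mono_left nhdsWithin_le_nhds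
    have h := h0.inv₀ (by norm_num)
    simpa using h
  have hXrinv : Tendsto (fun X : ℝ => 1 - X * r⁻¹) (𝓝[>] 0) (𝓝 1) := by
    have hc : Continuous fun X : ℝ => 1 - X * r⁻¹ := by continuity
    have h : Tendsto (fun X : ℝ => 1 - X * r⁻¹) (𝓝[>] 0) (𝓝 (1 - 0 * r⁻¹)) :=
      (hc.tendsto 0).mono_left nhdsWithin_le_nhds
    simpa using h
  have hone : Tendsto (fun X : ℝ => 1 + Real.log r * (-Real.log X)⁻¹) (𝓝[>] 0) (𝓝 1) := by
    have h := (hinv.const_mul (Real.log r)).const_add 1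
    simpa using h
  -- limits of the bounding functions
  have hψ : Tendsto (fun X : ℝ => X ^ (B * X) * ((B * X + 1)⁻¹ * (-Real.log X)⁻¹)
      + Real.exp (max (B * X * Real.log X) (B * X * Real.log r)) *
          ((q : ℝ)⁻¹ * (1 + Real.log r * (-Real.log X)⁻¹)))
      (𝓝[>] 0) (𝓝 (1 / (q : ℝ))) := by
    have h := (hXBX.mul (hBX1.mul hinv)).add (hhi.mul ((hone.const_mul ((q : ℝ)⁻¹))))
    have : (1 : ℝ) * (1 * 0) + 1 * ((q : ℝ)⁻¹ * 1) = 1 / q := by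
      rw [one_div]; ring
    rwa [this] at h
  have hφ : Tendsto (fun X : ℝ =>
      Real.exp (min (B * X * Real.log X) (B * X * Real.log r)) *
          ((q : ℝ)⁻¹ * (1 + Real.log r * (-Real.log X)⁻¹))
      - Real.exp (max (B * X * Real.log X) (B * X * Real.log r)) *
          (((q : ℝ)⁻¹) ^ 2 * ((1 - X * r⁻¹) * (-Real.log X)⁻¹)))
      (𝓝[>] 0) (𝓝 (1 / (q : ℝ))) := by
    have h := (hlo.mul (hone.const_mul ((q : ℝ)⁻¹))).sub
      (hhi.mul ((hXrinv.mul hinv).const_mul (((q : ℝ)⁻¹) ^ 2)))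
    have : (1 : ℝ) * ((q : ℝ)⁻¹ * 1) - 1 * (((q : ℝ)⁻¹) ^ 2 * (1 * 0)) = 1 / q := by
      rw [one_div]; ring
    rwa [this] at h
  -- squeeze
  set δ : ℝ := min r (min 1 (1 + |B|)⁻¹) with hδdef
  have hδ : 0 < δ := by positivity
  have hmem : Ioo (0 : ℝ) δ ∈ 𝓝[>] (0 : ℝ) := Ioo_mem_nhdsGT_of_mem ⟨le_refl 0, hδ⟩
  apply tendsto_of_tendsto_of_tendsto_of_le_of_le' hφ hψ
  · filter_upwards [hmem] with X hX
    obtain ⟨hX0, hXδ⟩ := hX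
    have hXr : X < r := lt_of_lt_of_le hXδ (min_le_left _ _)
    have hX1 : X < 1 := lt_of_lt_of_le hXδ ((min_le_right _ _).trans (min_le_left _ _))
    have hXB : X < (1 + |B|)⁻¹ := lt_of_lt_of_le hXδ ((min_le_right _ _).trans (min_le_right _ _))
    have hBX : -1 < B * X := by
      have h1 : |B| * X < 1 := by
        have h2 : |B| * X < |B| * (1 + |B|)⁻¹ + (1 + |B|)⁻¹ := by
          nlinarith [abs_nonneg B]
        have h3 : |B| * (1 + |B|)⁻¹ + (1 + |B|)⁻¹ = 1 := by
          field_simp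
          ring
        linarith
      have h4 := neg_abs_le (B * X)
      rw [abs_mul, abs_of_pos hX0] at h4
      linarith
    have hlogneg : Real.log X < 0 := Real.log_neg hX0 hX1
    have habs : |Real.log X| = -Real.log X := abs_of_neg hlogneg
    obtain ⟨hlow, _⟩ := aux_bounds q hq hr0 hX0 hXr hBX
    have hpos : (0 : ℝ) ≤ X⁻¹ * |Real.log X|⁻¹ := by positivity
    have h := mul_le_mul_of_nonneg_left hlow hpos
    refine le_trans (le_of_eq ?_) h
    have hlogne : Real.log X ≠ 0 := hlogneg.ne
    rw [habs]
    field_simp [hX0.ne', hlogne, hq0.ne', hr0.ne']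
    ring
  · filter_upwards [hmem] with X hX
    obtain ⟨hX0, hXδ⟩ := hX
    have hXr : X < r := lt_of_lt_of_le hXδ (min_le_left _ _)
    have hX1 : X < 1 := lt_of_lt_of_le hXδ ((min_le_right _ _).trans (min_le_left _ _))
    have hXB : X < (1 + |B|)⁻¹ := lt_of_lt_of_le hXδ ((min_le_right _ _).trans (min_le_right _ _))
    have hBX : -1 < B * X := by
      have h1 : |B| * X < 1 := by
        have h2 : |B| * X < |B| * (1 + |B|)⁻¹ + (1 + |B|)⁻¹ := by
          nlinarith [abs_nonneg B]
        have h3 : |B| * (1 + |B|)⁻¹ + (1 + |B|)⁻¹ = 1 := by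
          field_simp
          ring
        linarith
      have h4 := neg_abs_le (B * X)
      rw [abs_mul, abs_of_pos hX0] at h4
      linarith
    have hlogneg : Real.log X < 0 := Real.log_neg hX0 hX1
    have habs : |Real.log X| = -Real.log X := abs_of_neg hlogneg
    obtain ⟨_, hup⟩ := aux_bounds q hq hr0 hX0 hXr hBX
    have hpos : (0 : ℝ) ≤ X⁻¹ * |Real.log X|⁻¹ := by positivity
    have h := mul_le_mul_of_nonneg_left hup hpos
    refine le_trans h (le_of_eq ?_)
    have hlogne : Real.log X ≠ 0 := hlogneg.ne
    have hBX1ne : B * X + 1 ≠ 0 := by linarith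
    rw [habs, Real.rpow_add hX0 _ 1, Real.rpow_one]
    field_simp [hX0.ne', hlogne, hq0.ne', hr0.ne', hBX1ne]
    ring
end

section
/- Let q ≥ 1 be an integer, e(v) = exp(-1/(q v)), r ∈ (0,1), B ∈ ℝ, and define L(X) = ∫₀^r u^{-1 + B X} e(u)^X du for small X > 0. Then L(X) = -log X + d₀ + O(X log² X) as X → 0⁺, where d₀ = log r + ∫₀¹ v^{-1} e(v) dv + ∫₁^∞ v^{-1}(e(v) - 1) dv. In particular, lim_{X→0⁺} (L(X) + log X) = d₀. -/
open MeasureTheory Set Filter Asymptotics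


lemma auxExpBound {c v : ℝ} (hc : 0 < c) (hv : 0 < v) :
    Real.exp (-1 / (c * v)) ≤ 256 * c ^ 4 * v ^ 4 := by
  have hcv : 0 < c * v := mul_pos hc hv
  set x : ℝ := 1 / (c * v) with hx
  have hx0 : 0 < x := by positivity
  have h1 : x / 4 ≤ Real.exp (x / 4) := by
    have := Real.add_one_le_exp (x / 4); linarith
  have h2 : (x / 4) ^ 4 ≤ Real.exp x := by
    calc (x / 4) ^ 4 ≤ Real.exp (x / 4) ^ 4 := by
          exact pow_le_pow_left₀ (by positivity) h1 4
      _ = Real.exp x := by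
          rw [← Real.exp_nat_mul]; norm_num; ring_nf
  have h3 : Real.exp (-1 / (c * v)) = (Real.exp x)⁻¹ := by
    rw [← Real.exp_neg]; congr 1; rw [hx]; ring
  rw [h3]
  have h4 : (Real.exp x)⁻¹ ≤ ((x / 4) ^ 4)⁻¹ := by
    apply inv_anti₀ (by positivity) h2
  refine h4.trans_eq ?_
  rw [hx]
  field_simp
  ring

lemma auxNegLog {v : ℝ} (h0 : 0 < v) : -Real.log v ≤ 1 / v := by
  have h := Real.log_le_sub_one_of_pos (inv_pos.2 h0)
  rw [Real.log_inv] at h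
  have : 0 < v⁻¹ := inv_pos.2 h0
  rw [one_div]; linarith

lemma auxAbsExp (t : ℝ) : |Real.exp t - 1| ≤ |t| * Real.exp |t| := by
  rcases le_or_gt 0 t with ht | ht
  · rw [abs_of_nonneg ht, abs_of_nonneg (by linarith [Real.one_le_exp ht] : (0:ℝ) ≤ Real.exp t - 1)]
    have h1 := Real.add_one_le_exp (-t)
    have h2 : 0 < Real.exp t := Real.exp_pos t
    have h3 : Real.exp (-t) * Real.exp t = 1 := by
      rw [← Real.exp_add]; simp
    nlinarith
  · rw [abs_of_neg ht, abs_of_nonpos (by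
      have := Real.exp_lt_one_iff.2 ht; linarith : Real.exp t - 1 ≤ 0)]
    have h1 := Real.add_one_le_exp t
    have h2 : 1 ≤ Real.exp (-t) := Real.one_le_exp (by linarith)
    nlinarith


lemma auxRpowSmall {v β : ℝ} (h0 : 0 < v) (h1 : v ≤ 1) (hβ : |β| ≤ 1) :
    |v ^ β - 1| ≤ |β| * (1 / v) * (1 / v) := by
  have hlog : Real.log v ≤ 0 := Real.log_nonpos h0.le h1
  have hnl : -Real.log v ≤ 1 / v := auxNegLog h0
  rw [Real.rpow_def_of_pos h0]
  refine (auxAbsExp (Real.log v * β)).trans ?_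
  have habs : |Real.log v * β| = (-Real.log v) * |β| := by
    rw [abs_mul, abs_of_nonpos hlog]
  have hexp : Real.exp |Real.log v * β| ≤ 1 / v := by
    rw [habs]
    have h2 : (-Real.log v) * |β| ≤ -Real.log v := by nlinarith [abs_nonneg β]
    calc Real.exp ((-Real.log v) * |β|) ≤ Real.exp (-Real.log v) := Real.exp_le_exp.2 h2
      _ = 1 / v := by rw [Real.exp_neg, Real.exp_log h0, one_div]
  have hb : |Real.log v * β| ≤ |β| * (1 / v) := by
    rw [habs]; nlinarith [abs_nonneg β]
  have h3 : (0:ℝ) ≤ 1 / v := by positivity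
  nlinarith [abs_nonneg (Real.log v * β), Real.exp_pos |Real.log v * β|,
    mul_le_mul hb hexp (Real.exp_pos _).le (by positivity)]

lemma auxRpowCap {v β M : ℝ} (h0 : 0 < v) (habs : |Real.log v| * |β| ≤ M)
    (hM : M ≤ Real.log 2) : |v ^ β - 1| ≤ 2 * M := by
  have hM0 : 0 ≤ M := le_trans (by positivity) habs
  rw [Real.rpow_def_of_pos h0]
  refine (auxAbsExp (Real.log v * β)).trans ?_
  have h1 : |Real.log v * β| ≤ M := by rw [abs_mul]; exact habs
  have h2 : Real.exp |Real.log v * β| ≤ 2 := by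
    calc Real.exp |Real.log v * β| ≤ Real.exp (Real.log 2) := Real.exp_le_exp.2 (h1.trans hM)
      _ = 2 := Real.exp_log two_pos
  nlinarith [abs_nonneg (Real.log v * β), Real.exp_pos |Real.log v * β|]

lemma measG (c β : ℝ) : Measurable fun v : ℝ => v ^ (-1 + β) * Real.exp (-1 / (c * v)) := by
  fun_prop

lemma boundG {c v β : ℝ} (hc : 0 < c) (hv : v ∈ Ioc (0:ℝ) 1) (hβ : |β| ≤ 1) :
    ‖v ^ (-1 + β) * Real.exp (-1 / (c * v))‖ ≤ 256 * c ^ 4 := by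
  obtain ⟨hv0, hv1⟩ := hv
  have h1 : v ^ (-1 + β) ≤ v ^ (-2 : ℝ) := by
    apply Real.rpow_le_rpow_of_exponent_ge hv0 hv1
    have := abs_le.1 hβ; linarith [this.1]
  have h2 : v ^ (-2 : ℝ) = v⁻¹ * v⁻¹ := by
    rw [show (-2:ℝ) = (-1) + (-1) by norm_num, Real.rpow_add hv0, Real.rpow_neg_one]
  have h3 := auxExpBound hc hv0
  have h4 : (0:ℝ) ≤ v ^ (-1 + β) := Real.rpow_nonneg hv0.le _
  rw [Real.norm_eq_abs, abs_of_nonneg (by positivity)]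
  have h5 : v ^ (-1 + β) * Real.exp (-1/(c*v)) ≤ (v⁻¹ * v⁻¹) * (256 * c^4 * v^4) := by
    rw [← h2]
    exact mul_le_mul h1 h3 (Real.exp_pos _).le (by rw [h2]; positivity)
  have h6 : (v⁻¹ * v⁻¹) * (256 * c^4 * v^4) = 256 * c^4 * (v * v) := by
    field_simp
  have h7 : v * v ≤ 1 := by nlinarith
  nlinarith [pow_pos hc 4]

lemma boundW0 {c v : ℝ} (hc : 0 < c) (hv : v ∈ Ioc (0:ℝ) 1) :
    ‖v⁻¹ * Real.exp (-1 / (c * v))‖ ≤ 256 * c ^ 4 := by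
  obtain ⟨hv0, hv1⟩ := hv
  have h3 := auxExpBound hc hv0
  rw [Real.norm_eq_abs, abs_of_nonneg (by positivity)]
  have h5 : v⁻¹ * Real.exp (-1/(c*v)) ≤ v⁻¹ * (256 * c^4 * v^4) :=
    mul_le_mul_of_nonneg_left h3 (by positivity)
  have h6 : v⁻¹ * (256 * c^4 * v^4) = 256 * c^4 * (v * (v*v)) := by field_simp
  have h7 : v * (v * v) ≤ 1 := by nlinarith
  nlinarith [pow_pos hc 4]

lemma boundDiff {c v β : ℝ} (hc : 0 < c) (hv : v ∈ Ioc (0:ℝ) 1) (hβ : |β| ≤ 1) :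
    ‖(v ^ (-1 + β) - v⁻¹) * Real.exp (-1 / (c * v))‖ ≤ 256 * c ^ 4 * |β| := by
  obtain ⟨hv0, hv1⟩ := hv
  have hsplit : v ^ (-1 + β) - v⁻¹ = (v ^ β - 1) * v⁻¹ := by
    rw [show (-1+β) = β + (-1) by ring, Real.rpow_add hv0, Real.rpow_neg_one]; ring
  have h1 := auxRpowSmall hv0 hv1 hβ
  have h3 := auxExpBound hc hv0
  rw [Real.norm_eq_abs, hsplit, abs_mul, abs_mul, abs_of_nonneg (inv_nonneg.2 hv0.le),
    abs_of_nonneg (Real.exp_pos _).le]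
  have key : (|β| * (1/v) * (1/v)) * v⁻¹ * (256 * c^4 * v^4) = 256 * c^4 * |β| * v := by
    field_simp
  have h4 : |v ^ β - 1| * v⁻¹ * Real.exp (-1/(c*v)) ≤
      (|β| * (1/v) * (1/v)) * v⁻¹ * (256 * c^4 * v^4) := by
    apply mul_le_mul (mul_le_mul_of_nonneg_right h1 (by positivity)) h3 (Real.exp_pos _).le
    positivity
  have h7 : 256 * c^4 * |β| * v ≤ 256 * c^4 * |β| := by
    nlinarith [mul_nonneg (mul_nonneg (by positivity : (0:ℝ) ≤ 256*c^4) (abs_nonneg β)) (by linarith : (0:ℝ) ≤ 1 - v)]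
  linarith [h4.trans_eq key]


lemma boundW {c v : ℝ} (hc : 1 ≤ c) (hv : 1 ≤ v) :
    ‖v⁻¹ * (Real.exp (-1 / (c * v)) - 1)‖ ≤ v ^ (-2 : ℝ) := by
  have hv0 : 0 < v := lt_of_lt_of_le one_pos hv
  have hc0 : 0 < c := lt_of_lt_of_le one_pos hc
  have hcv : 0 < c * v := mul_pos hc0 hv0
  have h1 : Real.exp (-1 / (c * v)) ≤ 1 := by
    have hle : -1 / (c * v) ≤ 0 := by rw [neg_div]; exact neg_nonpos.2 (by positivity)
    calc Real.exp (-1 / (c * v)) ≤ Real.exp 0 := Real.exp_le_exp.2 hle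
      _ = 1 := Real.exp_zero
  have h3 : 1 - Real.exp (-1 / (c * v)) ≤ 1 / (c * v) := by
    have h2 := Real.add_one_le_exp (-1 / (c * v))
    have e : -1 / (c * v) = -(1 / (c * v)) := by ring
    linarith [h2, e]
  have h4 : 1 / (c * v) ≤ v⁻¹ := by
    rw [← one_div v]
    apply one_div_le_one_div_of_le hv0; nlinarith
  have h5 : v ^ (-2:ℝ) = v⁻¹ * v⁻¹ := by
    rw [show (-2:ℝ) = (-1) + (-1) by norm_num, Real.rpow_add hv0, Real.rpow_neg_one]
  rw [Real.norm_eq_abs, abs_mul, abs_of_nonneg (inv_nonneg.2 hv0.le),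
    abs_of_nonpos (by linarith : Real.exp (-1/(c*v)) - 1 ≤ 0), h5]
  have h6 : -(Real.exp (-1/(c*v)) - 1) ≤ v⁻¹ := by linarith [h3, h4]
  apply mul_le_mul_of_nonneg_left h6 (inv_nonneg.2 hv0.le)

set_option maxHeartbeats 2000000 in
lemma mainBound (c r B X A₀ A₁ : ℝ) (hc1 : 1 ≤ c) (hr0 : 0 < r) (hr1 : r < 1)
    (hX0 : 0 < X) (hXr : X < r) (hXe : X ≤ Real.exp (-1))
    (hB1 : |B * X| ≤ 1 / 2)
    (hB2 : |B * X| * (-Real.log X) ≤ Real.log 2)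
    (hX2 : X * Real.log X ^ 2 ≤ 1)
    (hA₀ : A₀ = ∫ v in Ioc (0:ℝ) 1, v⁻¹ * Real.exp (-1 / (c * v)))
    (hA₁ : A₁ = ∫ v in Ioi (1:ℝ), v⁻¹ * (Real.exp (-1 / (c * v)) - 1)) :
    |(∫ u in Ioo (0:ℝ) r, u ^ (-1 + B * X) * Real.exp (-1 / (c * u)) ^ X) -
        (-Real.log X + (Real.log r + A₀ + A₁))| ≤
      (2 * |B| + 2 * |B| * (|Real.log r + A₀ + A₁| + (256 * c ^ 4 * |B| + 1 / r + 2 * |B|)) +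
          (256 * c ^ 4 * |B| + 1 / r + 2 * |B|)) *
        (X * Real.log X ^ 2) := by
  have hc0 : (0:ℝ) < c := lt_of_lt_of_le one_pos hc1
  set β := B * X with hβdef
  have hβ1 : |β| ≤ 1 := by rw [hβdef]; linarith
  have hT1 : 1 < r / X := (one_lt_div hX0).2 hXr
  have hT0 : 0 < r / X := lt_trans one_pos hT1
  set T := r / X with hTdef
  have hlXle : Real.log X ≤ -1 := by
    have h := (Real.log_le_log_iff hX0 (Real.exp_pos _)).2 hXe
    rwa [Real.log_exp] at h
  set lX := -Real.log X with hlXdef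
  have hlX1 : 1 ≤ lX := by rw [hlXdef]; linarith
  have hX1 : X ≤ 1 := by
    have : Real.exp (-1) ≤ 1 := by
      rw [← Real.exp_zero]; exact Real.exp_le_exp.2 (by norm_num)
    linarith
  have hlT0 : 0 ≤ Real.log T := Real.log_nonneg hT1.le
  have hlogT : Real.log T = Real.log r - Real.log X := Real.log_div hr0.ne' hX0.ne'
  have hlTlX : Real.log T ≤ lX := by
    rw [hlogT, hlXdef]
    have : Real.log r ≤ 0 := Real.log_nonpos hr0.le hr1.le
    linarith
  have hβX : |β| = |B| * X := by rw [hβdef, abs_mul, abs_of_pos hX0]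
  -- the substituted integrand
  set g : ℝ → ℝ := fun v => v ^ (-1 + β) * Real.exp (-1 / (c * v)) with hgdef
  -- continuity facts on Ioi 0
  have hcont_rpow : ContinuousOn (fun v : ℝ => v ^ (-1 + β)) (Ioi 0) := fun v hv =>
    (Real.continuousAt_rpow_const v _ (Or.inl (ne_of_gt hv))).continuousWithinAt
  have hcont_exp : ContinuousOn (fun v : ℝ => Real.exp (-1 / (c * v))) (Ioi 0) := by
    apply Real.continuous_exp.comp_continuousOn
    apply ContinuousOn.div continuousOn_const (continuous_const.mul continuous_id).continuousOn
    intro v hv; exact (mul_pos hc0 hv).ne'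
  have hcont_inv : ContinuousOn (fun v : ℝ => v⁻¹) (Ioi 0) := fun v hv =>
    (continuousAt_inv₀ (ne_of_gt hv)).continuousWithinAt
  have hcont_g : ContinuousOn g (Ioi 0) := hcont_rpow.mul hcont_exp
  have hsub : uIcc (1:ℝ) T ⊆ Ioi 0 := by
    rw [uIcc_of_le hT1.le]; intro x hx; exact lt_of_lt_of_le one_pos hx.1
  -- change of variables
  have hL : (∫ u in Ioo (0:ℝ) r, u ^ (-1 + β) * Real.exp (-1 / (c * u)) ^ X)
      = X ^ β * ∫ v in (0:ℝ)..T, g v := by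
    have step1 : (∫ u in Ioo (0:ℝ) r, u ^ (-1 + β) * Real.exp (-1 / (c * u)) ^ X)
        = ∫ u in (0:ℝ)..r, u ^ (-1 + β) * Real.exp (-(X / (c * u))) := by
      rw [intervalIntegral.integral_of_le hr0.le, integral_Ioc_eq_integral_Ioo]
      apply setIntegral_congr_fun measurableSet_Ioo
      intro u hu
      have hu0 : 0 < u := hu.1
      show u ^ (-1 + β) * Real.exp (-1 / (c * u)) ^ X = u ^ (-1 + β) * Real.exp (-(X / (c * u)))
      rw [← Real.exp_mul]
      congr 2; ring
    have step2 : (∫ v in (0:ℝ)..T, (fun u => u ^ (-1 + β) * Real.exp (-(X / (c * u)))) (X * v))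
        = X⁻¹ • ∫ u in (0:ℝ)..r, u ^ (-1 + β) * Real.exp (-(X / (c * u))) := by
      have h := intervalIntegral.integral_comp_mul_left
        (a := (0:ℝ)) (b := T) (f := fun u => u ^ (-1 + β) * Real.exp (-(X / (c * u)))) hX0.ne'
      rw [h, mul_zero, show X * T = r by rw [hTdef]; field_simp]
    have step3 : (∫ v in (0:ℝ)..T, (fun u => u ^ (-1 + β) * Real.exp (-(X / (c * u)))) (X * v))
        = X ^ (-1 + β) * ∫ v in (0:ℝ)..T, g v := by
      rw [← intervalIntegral.integral_const_mul]
      rw [intervalIntegral.integral_of_le hT0.le, intervalIntegral.integral_of_le hT0.le]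
      apply setIntegral_congr_fun measurableSet_Ioc
      intro v hv
      have hv0 : 0 < v := hv.1
      show (X * v) ^ (-1 + β) * Real.exp (-(X / (c * (X * v))))
          = X ^ (-1 + β) * (v ^ (-1 + β) * Real.exp (-1 / (c * v)))
      rw [Real.mul_rpow hX0.le hv0.le]
      have hee : -(X / (c * (X * v))) = -1 / (c * v) := by field_simp
      rw [hee]; ring
    have step2' : (∫ u in (0:ℝ)..r, u ^ (-1 + β) * Real.exp (-(X / (c * u))))
        = X • ∫ v in (0:ℝ)..T, (fun u => u ^ (-1 + β) * Real.exp (-(X / (c * u)))) (X * v) := by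
      rw [step2, smul_smul, mul_inv_cancel₀ hX0.ne', one_smul]
    rw [step1, step2', step3, smul_eq_mul, ← mul_assoc]
    congr 1
    conv_rhs => rw [show β = 1 + (-1 + β) by ring, Real.rpow_add hX0, Real.rpow_one]
  -- integrability
  have hgInt1 : IntegrableOn g (Ioc (0:ℝ) 1) := by
    apply Measure.integrableOn_of_bounded (M := 256 * c ^ 4) measure_Ioc_lt_top.ne
      (measG c β).aestronglyMeasurable
    filter_upwards [ae_restrict_mem measurableSet_Ioc] with v hv
    exact boundG hc0 hv hβ1
  have hgII1 : IntervalIntegrable g volume 0 1 :=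
    (intervalIntegrable_iff_integrableOn_Ioc_of_le zero_le_one).2 hgInt1
  have hgIIT : IntervalIntegrable g volume 1 T := (hcont_g.mono hsub).intervalIntegrable
  set M : ℝ := ∫ v in (0:ℝ)..T, g v with hMdef
  have hMsplit : M = (∫ v in (0:ℝ)..1, g v) + ∫ v in (1:ℝ)..T, g v :=
    (intervalIntegral.integral_add_adjacent_intervals hgII1 hgIIT).symm
  -- P2 : compare with A₀
  have hw0Int : IntegrableOn (fun v : ℝ => v⁻¹ * Real.exp (-1 / (c * v))) (Ioc (0:ℝ) 1) := by
    apply Measure.integrableOn_of_bounded (M := 256 * c ^ 4) measure_Ioc_lt_top.ne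
      (by fun_prop : Measurable fun v : ℝ => v⁻¹ * Real.exp (-1 / (c * v))).aestronglyMeasurable
    filter_upwards [ae_restrict_mem measurableSet_Ioc] with v hv
    exact boundW0 hc0 hv
  have hP2 : |(∫ v in (0:ℝ)..1, g v) - A₀| ≤ 256 * c ^ 4 * |β| := by
    rw [intervalIntegral.integral_of_le zero_le_one, hA₀, ← integral_sub hgInt1 hw0Int]
    have hb : ∀ x ∈ Ioc (0:ℝ) 1, ‖g x - x⁻¹ * Real.exp (-1 / (c * x))‖ ≤ 256 * c ^ 4 * |β| := by
      intro v hv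
      have : g v - v⁻¹ * Real.exp (-1 / (c * v))
          = (v ^ (-1 + β) - v⁻¹) * Real.exp (-1 / (c * v)) := by simp only [hgdef]; ring
      rw [this]
      exact boundDiff hc0 hv hβ1
    have := norm_setIntegral_le_of_norm_le_const (μ := volume) (s := Ioc (0:ℝ) 1)
      measure_Ioc_lt_top hb
    simpa [Real.volume_Ioc, Real.volume_real_Ioc] using this
  -- I₂ decomposition
  set w : ℝ → ℝ := fun v => v⁻¹ * (Real.exp (-1 / (c * v)) - 1) with hwdef
  set p : ℝ → ℝ := fun v => (v ^ β - 1) * (v⁻¹ * Real.exp (-1 / (c * v))) with hpdef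
  have hcont_w : ContinuousOn w (Ioi 0) := hcont_inv.mul (hcont_exp.sub continuousOn_const)
  have hcont_p : ContinuousOn p (Ioi 0) := by
    apply ContinuousOn.mul ?_ (hcont_inv.mul hcont_exp)
    exact ContinuousOn.sub (fun v hv =>
      (Real.continuousAt_rpow_const v _ (Or.inl (ne_of_gt hv))).continuousWithinAt)
      continuousOn_const
  have hI2 : (∫ v in (1:ℝ)..T, g v)
      = (∫ v in (1:ℝ)..T, v⁻¹) + ((∫ v in (1:ℝ)..T, w v) + ∫ v in (1:ℝ)..T, p v) := by
    rw [← intervalIntegral.integral_add ((hcont_w.mono hsub).intervalIntegrable)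
      ((hcont_p.mono hsub).intervalIntegrable),
      ← intervalIntegral.integral_add (g := fun x => w x + p x) ((hcont_inv.mono hsub).intervalIntegrable)
      (((hcont_w.mono hsub).add (hcont_p.mono hsub)).intervalIntegrable)]
    apply intervalIntegral.integral_congr
    intro v hv
    have hv0 : 0 < v := hsub hv
    have hsplit : v ^ (-1 + β) = v ^ β * v⁻¹ := by
      rw [show (-1 + β) = β + (-1) by ring, Real.rpow_add hv0, Real.rpow_neg_one]
    simp only [hgdef, hwdef, hpdef, hsplit]; ring
  have hlogint : (∫ v in (1:ℝ)..T, v⁻¹) = Real.log T := by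
    rw [integral_inv_of_pos one_pos hT0, div_one]
  -- J and tail
  have hwbdd : IntegrableOn (fun v : ℝ => v ^ (-2:ℝ)) (Ioi 1) :=
    integrableOn_Ioi_rpow_of_lt (by norm_num) one_pos
  have hwIntIoi : IntegrableOn w (Ioi 1) := by
    apply Integrable.mono' hwbdd
      ((hcont_w.mono (t := Ioi (1:ℝ)) (fun x hx => mem_Ioi.2 (lt_of_lt_of_le one_pos (le_of_lt (mem_Ioi.1 hx))))).aestronglyMeasurable
        measurableSet_Ioi)
    filter_upwards [ae_restrict_mem measurableSet_Ioi] with v hv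
    exact boundW hc1 hv.le
  have hsplitIoi : A₁ = (∫ v in Ioc (1:ℝ) T, w v) + ∫ v in Ioi T, w v := by
    rw [hA₁, ← Ioc_union_Ioi_eq_Ioi hT1.le,
      setIntegral_union (Ioc_disjoint_Ioi le_rfl) measurableSet_Ioi
        (hwIntIoi.mono_set Ioc_subset_Ioi_self) (hwIntIoi.mono_set (Ioi_subset_Ioi hT1.le))]
  have hJ : (∫ v in (1:ℝ)..T, w v) = A₁ - ∫ v in Ioi T, w v := by
    rw [intervalIntegral.integral_of_le hT1.le, hsplitIoi]; ring
  have htail : |∫ v in Ioi T, w v| ≤ X / r := by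
    have h1 : ‖∫ v in Ioi T, w v‖ ≤ ∫ v in Ioi T, v ^ (-2:ℝ) := by
      apply norm_integral_le_of_norm_le (hwbdd.mono_set (Ioi_subset_Ioi hT1.le))
      filter_upwards [ae_restrict_mem measurableSet_Ioi] with v hv
      exact boundW hc1 (le_trans hT1.le hv.le)
    have h2 : (∫ v in Ioi T, v ^ (-2:ℝ)) = X / r := by
      rw [integral_Ioi_rpow_of_lt (by norm_num) hT0]
      norm_num
      rw [Real.rpow_neg_one, hTdef, inv_div]
    rw [Real.norm_eq_abs, h2] at h1
    exact h1
  -- P4 bound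
  have hP4 : |∫ v in (1:ℝ)..T, p v| ≤ 2 * |β| * lX * Real.log T := by
    have hb : ∀ᵐ t ∂volume.restrict (Set.uIoc (1:ℝ) T), ‖p t‖ ≤ (2 * (|β| * lX)) * t⁻¹ := by
      rw [uIoc_of_le hT1.le]
      filter_upwards [ae_restrict_mem measurableSet_Ioc] with v hv
      obtain ⟨hv1, hvT⟩ := hv
      have hv0 : 0 < v := lt_trans one_pos hv1
      have h1 : |v ^ β - 1| ≤ 2 * (|β| * lX) := by
        apply auxRpowCap hv0 ?_ ?_
        · rw [abs_of_nonneg (Real.log_nonneg hv1.le)]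
          have hlv : Real.log v ≤ Real.log T := (Real.log_le_log_iff hv0 hT0).2 hvT
          nlinarith [abs_nonneg β, hlTlX]
        · exact hB2
      have hexple : Real.exp (-1 / (c * v)) ≤ 1 := by
        have hle : -1 / (c * v) ≤ 0 := by
          rw [neg_div]; exact neg_nonpos.2 (by positivity)
        calc Real.exp (-1 / (c * v)) ≤ Real.exp 0 := Real.exp_le_exp.2 hle
          _ = 1 := Real.exp_zero
      rw [hpdef]
      simp only [Real.norm_eq_abs, abs_mul]
      rw [abs_of_nonneg (inv_nonneg.2 hv0.le), abs_of_nonneg (Real.exp_pos _).le]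
      calc |v ^ β - 1| * (v⁻¹ * Real.exp (-1 / (c * v)))
          ≤ (2 * (|β| * lX)) * (v⁻¹ * 1) := by
            apply mul_le_mul h1 (mul_le_mul_of_nonneg_left hexple (inv_nonneg.2 hv0.le))
              (by positivity) (by positivity)
        _ = (2 * (|β| * lX)) * v⁻¹ := by ring
    have h2 := intervalIntegral.norm_integral_le_abs_of_norm_le hb
      (((hcont_inv.mono hsub).intervalIntegrable).const_mul _)
    rw [intervalIntegral.integral_const_mul, hlogint, Real.norm_eq_abs] at h2
    calc |∫ v in (1:ℝ)..T, p v| ≤ |2 * (|β| * lX) * Real.log T| := h2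
      _ = 2 * |β| * lX * Real.log T := by
          rw [abs_of_nonneg (by positivity)]; ring
  -- assemble M estimate
  have hMeq : M = (∫ v in (0:ℝ)..1, g v) + Real.log T + ((A₁ - ∫ v in Ioi T, w v)
      + ∫ v in (1:ℝ)..T, p v) := by
    rw [hMsplit, hI2, hlogint, hJ]; ring
  have hMest : |M + Real.log X - (Real.log r + A₀ + A₁)|
      ≤ 256 * c ^ 4 * |β| + X / r + 2 * |β| * lX * Real.log T := by
    have heq : M + Real.log X - (Real.log r + A₀ + A₁)
        = ((∫ v in (0:ℝ)..1, g v) - A₀) + (-(∫ v in Ioi T, w v)) + ∫ v in (1:ℝ)..T, p v := by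
      rw [hMeq, hlogT]; ring
    rw [heq]
    refine (abs_add_three _ _ _).trans ?_
    rw [abs_neg]
    exact add_le_add (add_le_add hP2 htail) hP4
  -- X^β - 1
  have hXβ : |X ^ β - 1| ≤ 2 * (|β| * lX) := by
    apply auxRpowCap hX0 ?_ ?_
    · rw [abs_of_nonpos (by linarith : Real.log X ≤ 0)]
      exact le_of_eq (mul_comm _ _)
    · exact hB2
  -- final assembly
  set D : ℝ := Real.log r + A₀ + A₁ with hDdef
  set C₁ : ℝ := 256 * c ^ 4 * |B| + 1 / r + 2 * |B| with hC₁def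
  clear_value β T lX g M w p D C₁
  have hlXsq : Real.log X ^ 2 = lX * lX := by rw [hlXdef]; ring
  have hXlX2 : X * (lX * lX) ≤ 1 := by rw [← hlXsq]; exact hX2
  have hlXlX1 : (1:ℝ) ≤ lX * lX := by nlinarith [hlX1]
  have hXlX : X * lX ≤ X * (lX * lX) := by
    nlinarith [mul_nonneg (mul_nonneg hX0.le (by linarith : (0:ℝ) ≤ lX)) (by linarith : (0:ℝ) ≤ lX - 1)]
  have hE1 : 256 * c ^ 4 * |β| + X / r + 2 * |β| * lX * Real.log T ≤ C₁ * (X * (lX * lX)) := by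
    rw [hC₁def, hβX]
    have e1 : 256 * c ^ 4 * (|B| * X) ≤ 256 * c ^ 4 * |B| * (X * (lX * lX)) := by
      nlinarith [mul_nonneg (mul_nonneg (mul_nonneg (by positivity : (0:ℝ) ≤ 256 * c ^ 4)
        (abs_nonneg B)) hX0.le) (by linarith : (0:ℝ) ≤ lX * lX - 1)]
    have e2 : X / r ≤ 1 / r * (X * (lX * lX)) := by
      rw [div_eq_mul_one_div X r]
      nlinarith [mul_nonneg (mul_nonneg (le_of_lt (one_div_pos.2 hr0)) hX0.le)
        (by linarith : (0:ℝ) ≤ lX * lX - 1)]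
    have e3 : 2 * (|B| * X) * lX * Real.log T ≤ 2 * |B| * (X * (lX * lX)) := by
      calc 2 * (|B| * X) * lX * Real.log T ≤ 2 * (|B| * X) * lX * lX :=
            mul_le_mul_of_nonneg_left hlTlX (by positivity)
        _ = 2 * |B| * (X * (lX * lX)) := by ring
    linarith [e1, e2, e3]
  have hC₁0 : 0 ≤ C₁ := by rw [hC₁def]; positivity
  have hMabs : |M| ≤ lX + |D| + C₁ := by
    have h1 : |M| ≤ |M + Real.log X - D| + |(-Real.log X + D)| := by
      have e : M = (M + Real.log X - D) + (-Real.log X + D) := by ring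
      calc |M| = |(M + Real.log X - D) + (-Real.log X + D)| := by rw [← e]
        _ ≤ _ := abs_add_le (M + Real.log X - D) (-Real.log X + D)
    have h2 : |(-Real.log X + D)| ≤ lX + |D| := by
      refine (abs_add_le (-Real.log X) D).trans ?_
      rw [abs_neg, abs_of_nonpos (by linarith : Real.log X ≤ 0), hlXdef]
    have h3 : |M + Real.log X - D| ≤ C₁ := by
      refine (hMest.trans hE1).trans ?_
      have := mul_le_mul_of_nonneg_left hXlX2 hC₁0
      linarith
    linarith
  rw [hL]
  have hre : X ^ β * M - (lX + D) = (X ^ β - 1) * M + (M + Real.log X - D) := by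
    rw [hlXdef]; ring
  rw [hre]
  refine (abs_add_le ((X ^ β - 1) * M) (M + Real.log X - D)).trans ?_
  rw [abs_mul]
  have h1 : |X ^ β - 1| * |M| ≤ (2 * (|B| * X * lX)) * (lX + |D| + C₁) := by
    apply mul_le_mul ?_ hMabs (abs_nonneg M) (by positivity)
    rw [hβX] at hXβ; linarith [hXβ]
  have h2 : (2 * (|B| * X * lX)) * (lX + |D| + C₁)
      = 2 * |B| * (X * (lX * lX)) + (2 * |B| * (|D| + C₁)) * (X * lX) := by ring
  have h3 : (2 * |B| * (|D| + C₁)) * (X * lX) ≤ (2 * |B| * (|D| + C₁)) * (X * (lX * lX)) := by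
    apply mul_le_mul_of_nonneg_left hXlX (by positivity)
  have h4 : |M + Real.log X - D| ≤ C₁ * (X * (lX * lX)) := hMest.trans hE1
  rw [hlXsq]
  have h5 : (2 * |B| + 2 * |B| * (|D| + C₁) + C₁) * (X * (lX * lX))
      = 2 * |B| * (X * (lX * lX)) + (2 * |B| * (|D| + C₁)) * (X * (lX * lX))
        + C₁ * (X * (lX * lX)) := by ring
  linarith [h1, h2, h3, h4, h5]


/-- Case `A = -1`: with `L(X) = ∫₀^r u^{-1+BX} e(u)^X du`, `e(u) = exp(-1/(q u))`,
one has `L(X) = -log X + d₀ + O(X log² X)` as `X → 0⁺`, where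
`d₀ = log r + ∫₀¹ v⁻¹ e(v) dv + ∫₁^∞ v⁻¹ (e(v) - 1) dv`; in particular
`lim_{X → 0⁺} (L(X) + log X) = d₀`. -/
theorem stmt13 (q : ℕ) (hq : 1 ≤ q) (r : ℝ) (hr : r ∈ Ioo (0 : ℝ) 1) (B : ℝ) :
    (fun X : ℝ =>
        (∫ u in Ioo (0 : ℝ) r, u ^ (-1 + B * X) * Real.exp (-1 / (q * u)) ^ X) -
          (-Real.log X +
            (Real.log r + (∫ v in Ioc (0 : ℝ) 1, v⁻¹ * Real.exp (-1 / (q * v))) +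
              ∫ v in Ioi (1 : ℝ), v⁻¹ * (Real.exp (-1 / (q * v)) - 1))))
      =O[nhdsWithin 0 (Ioi 0)] (fun X : ℝ => X * Real.log X ^ 2) ∧
    Tendsto
      (fun X : ℝ =>
        (∫ u in Ioo (0 : ℝ) r, u ^ (-1 + B * X) * Real.exp (-1 / (q * u)) ^ X) +
          Real.log X)
      (nhdsWithin 0 (Ioi 0))
      (nhds (Real.log r + (∫ v in Ioc (0 : ℝ) 1, v⁻¹ * Real.exp (-1 / (q * v))) +
        ∫ v in Ioi (1 : ℝ), v⁻¹ * (Real.exp (-1 / (q * v)) - 1))) := by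
  obtain ⟨hr0, hr1⟩ := hr
  have hc1 : (1:ℝ) ≤ (q:ℝ) := by exact_mod_cast hq
  set c : ℝ := (q:ℝ) with hcdef
  set A₀ : ℝ := ∫ v in Ioc (0:ℝ) 1, v⁻¹ * Real.exp (-1 / (c * v)) with hA₀def
  set A₁ : ℝ := ∫ v in Ioi (1:ℝ), v⁻¹ * (Real.exp (-1 / (c * v)) - 1) with hA₁def
  set d₀ : ℝ := Real.log r + A₀ + A₁ with hd₀def
  set C : ℝ := 2 * |B| + 2 * |B| * (|Real.log r + A₀ + A₁| + (256 * c ^ 4 * |B| + 1 / r + 2 * |B|)) +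
      (256 * c ^ 4 * |B| + 1 / r + 2 * |B|) with hCdef
  have h1r : (0:ℝ) ≤ 1 / r := le_of_lt (one_div_pos.2 hr0)
  have hC₁0 : (0:ℝ) ≤ 256 * c ^ 4 * |B| + 1 / r + 2 * |B| :=
    add_nonneg (add_nonneg (by positivity) h1r) (by positivity)
  have hC0 : 0 ≤ C := by
    rw [hCdef]
    exact add_nonneg (add_nonneg (by positivity)
      (mul_nonneg (by positivity) (add_nonneg (abs_nonneg _) hC₁0))) hC₁0
  -- tendsto facts
  have t1 : Tendsto (fun X : ℝ => X * -Real.log X) (nhdsWithin 0 (Ioi 0)) (nhds 0) := by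
    have h := (tendsto_log_mul_rpow_nhdsGT_zero one_pos).neg
    rw [neg_zero] at h
    refine h.congr fun X => ?_
    rw [Real.rpow_one]; ring
  have t2 : Tendsto (fun X : ℝ => X * Real.log X ^ 2) (nhdsWithin 0 (Ioi 0)) (nhds 0) := by
    have h := tendsto_log_mul_rpow_nhdsGT_zero (by norm_num : (0:ℝ) < 1/2)
    have h2 := h.mul h
    rw [mul_zero] at h2
    apply h2.congr'
    filter_upwards [self_mem_nhdsWithin] with X hX
    have hX0 : (0:ℝ) < X := hX
    have hxx : X ^ ((1:ℝ)/2) * X ^ ((1:ℝ)/2) = X := by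
      rw [← Real.rpow_add hX0]; norm_num
    calc Real.log X * X ^ ((1:ℝ)/2) * (Real.log X * X ^ ((1:ℝ)/2))
        = Real.log X ^ 2 * (X ^ ((1:ℝ)/2) * X ^ ((1:ℝ)/2)) := by ring
      _ = X * Real.log X ^ 2 := by rw [hxx]; ring
  -- eventual conditions
  have e1 : ∀ᶠ X in nhdsWithin (0:ℝ) (Ioi 0), (0:ℝ) < X := self_mem_nhdsWithin
  have e2 : ∀ᶠ X in nhdsWithin (0:ℝ) (Ioi 0), X < r :=
    Filter.Eventually.filter_mono nhdsWithin_le_nhds (eventually_lt_nhds hr0)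
  have e3 : ∀ᶠ X in nhdsWithin (0:ℝ) (Ioi 0), X ≤ Real.exp (-1) :=
    Filter.Eventually.filter_mono nhdsWithin_le_nhds
      ((eventually_lt_nhds (Real.exp_pos (-1))).mono fun X h => le_of_lt h)
  have tB : Tendsto (fun X : ℝ => |B| * X) (nhdsWithin 0 (Ioi 0)) (nhds 0) := by
    have h : Tendsto (fun X : ℝ => |B| * X) (nhds 0) (nhds (|B| * 0)) :=
      (continuous_const.mul continuous_id).tendsto 0
    rw [mul_zero] at h
    exact h.mono_left nhdsWithin_le_nhds
  have e4 : ∀ᶠ X in nhdsWithin (0:ℝ) (Ioi 0), |B| * X ≤ 1/2 :=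
    tB.eventually (eventually_le_nhds (by norm_num))
  have e5 : ∀ᶠ X in nhdsWithin (0:ℝ) (Ioi 0), |B| * (X * -Real.log X) ≤ Real.log 2 := by
    have h := t1.const_mul |B|
    rw [mul_zero] at h
    exact h.eventually (eventually_le_nhds (Real.log_pos one_lt_two))
  have e6 : ∀ᶠ X in nhdsWithin (0:ℝ) (Ioi 0), X * Real.log X ^ 2 ≤ 1 :=
    t2.eventually (eventually_le_nhds one_pos)
  have hkey : ∀ᶠ X in nhdsWithin (0:ℝ) (Ioi 0),
      |(∫ u in Ioo (0 : ℝ) r, u ^ (-1 + B * X) * Real.exp (-1 / (c * u)) ^ X) -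
        (-Real.log X + d₀)| ≤ C * (X * Real.log X ^ 2) := by
    filter_upwards [e1, e2, e3, e4, e5, e6] with X hX0 hXr hXe hB1 hB2 hX2
    have hBX1 : |B * X| ≤ 1/2 := by rw [abs_mul, abs_of_pos hX0]; exact hB1
    have hBX2 : |B * X| * (-Real.log X) ≤ Real.log 2 := by
      rw [abs_mul, abs_of_pos hX0]
      calc |B| * X * -Real.log X = |B| * (X * -Real.log X) := by ring
        _ ≤ Real.log 2 := hB2
    exact mainBound c r B X A₀ A₁ hc1 hr0 hr1 hX0 hXr hXe hBX1 hBX2 hX2 hA₀def hA₁def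
  have hbig : (fun X : ℝ =>
      (∫ u in Ioo (0 : ℝ) r, u ^ (-1 + B * X) * Real.exp (-1 / (c * u)) ^ X) -
        (-Real.log X + d₀)) =O[nhdsWithin 0 (Ioi 0)] fun X : ℝ => X * Real.log X ^ 2 := by
    rw [isBigO_iff]
    refine ⟨C, ?_⟩
    filter_upwards [hkey] with X hb
    rw [Real.norm_eq_abs, Real.norm_eq_abs]
    exact le_trans hb (mul_le_mul_of_nonneg_left (le_abs_self _) hC0)
  constructor
  · exact hbig
  · have hdiff0 : Tendsto (fun X : ℝ =>
        (∫ u in Ioo (0 : ℝ) r, u ^ (-1 + B * X) * Real.exp (-1 / (c * u)) ^ X) -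
          (-Real.log X + d₀)) (nhdsWithin 0 (Ioi 0)) (nhds 0) :=
      hbig.trans_tendsto t2
    have h := hdiff0.add (tendsto_const_nhds (x := d₀))
    rw [zero_add] at h
    refine h.congr fun X => ?_
    ring
end

section
/- Let a, b, q be integers with 2 ≤ a ≤ b and q even with 2 ≤ q ≤ a, let p > 0, and set f(x,y) = x^a y^b + x^{a-q} y^b exp(-1/|y|^p) (with the exponential term 0 when y = 0). Then for every (x, y) ∈ ℝ² with x, y > 0 and every s with Re(s) ≤ 0, the bound |f(x,y)|^{Re(s)} ≤ x^{a·Re(s)} y^{b·Re(s)} holds; consequently for any nonnegative integers α, β, the integral ∫_V |f(x,y)|^s x^α y^β dx dy over V = [0,r₁]×[0,r₂] converges absolutely and locally uniformly on the half-plane Re(s) > max(-(α+1)/a, -(β+1)/b), and defines a holomorphic function there. -/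
open MeasureTheory Set

/-- The smooth function `f(x,y) = x^a y^b + x^{a-q} y^b exp(-1/|y|^p)`, with the
flat exponential term interpreted as `0` at `y = 0`. -/
noncomputable def fC (a b q : ℕ) (p : ℝ) (x y : ℝ) : ℝ :=
  x ^ a * y ^ b + x ^ (a - q) * y ^ b * (if y = 0 then 0 else Real.exp (-1 / |y| ^ p))

namespace Stmt14Aux

lemma fC_lower (a b q : ℕ) (p : ℝ) {x y : ℝ} (hx : 0 ≤ x) (hy : 0 ≤ y) :
    x ^ a * y ^ b ≤ fC a b q p x y := by
  have h0 : (0:ℝ) ≤ (if y = 0 then 0 else Real.exp (-1 / |y| ^ p)) := by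
    split
    · exact le_refl 0
    · exact (Real.exp_pos _).le
  have h : 0 ≤ x ^ (a - q) * y ^ b * (if y = 0 then 0 else Real.exp (-1 / |y| ^ p)) :=
    mul_nonneg (mul_nonneg (pow_nonneg hx _) (pow_nonneg hy _)) h0
  unfold fC; linarith

lemma fC_pos (a b q : ℕ) (p : ℝ) {x y : ℝ} (hx : 0 < x) (hy : 0 < y) :
    0 < fC a b q p x y :=
  lt_of_lt_of_le (by positivity) (fC_lower a b q p hx.le hy.le)

lemma fC_le_two (a b q : ℕ) (p : ℝ) {x y : ℝ} (hx0 : 0 ≤ x) (hx1 : x ≤ 1)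
    (hy0 : 0 ≤ y) (hy1 : y ≤ 1) : fC a b q p x y ≤ 2 := by
  have h1 : x ^ a * y ^ b ≤ 1 :=
    mul_le_one₀ (pow_le_one₀ hx0 hx1) (pow_nonneg hy0 _) (pow_le_one₀ hy0 hy1)
  have h2 : x ^ (a - q) * y ^ b * (if y = 0 then 0 else Real.exp (-1 / |y| ^ p)) ≤ 1 := by
    have he : (if y = 0 then 0 else Real.exp (-1 / |y| ^ p)) ≤ 1 := by
      split
      · norm_num
      · rename_i hy
        rw [Real.exp_le_one_iff]
        apply div_nonpos_of_nonpos_of_nonneg (by norm_num)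
        positivity
    have he0 : (0:ℝ) ≤ (if y = 0 then 0 else Real.exp (-1 / |y| ^ p)) := by
      split
      · exact le_refl 0
      · exact (Real.exp_pos _).le
    calc x ^ (a - q) * y ^ b * (if y = 0 then 0 else Real.exp (-1 / |y| ^ p))
        ≤ x ^ (a - q) * y ^ b * 1 := by
          apply mul_le_mul_of_nonneg_left he (by positivity)
      _ ≤ 1 := by
          rw [mul_one]
          exact mul_le_one₀ (pow_le_one₀ hx0 hx1) (pow_nonneg hy0 _) (pow_le_one₀ hy0 hy1)
  unfold fC; linarith

lemma fC_meas (a b q : ℕ) (p : ℝ) (hp : 0 < p) :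
    Measurable fun z : ℝ × ℝ => fC a b q p z.1 z.2 := by
  unfold fC
  apply Measurable.add
  · exact (measurable_fst.pow_const a).mul (measurable_snd.pow_const b)
  · refine ((measurable_fst.pow_const (a - q)).mul (measurable_snd.pow_const b)).mul ?_
    have hmeas : Measurable fun y : ℝ => Real.exp (-1 / |y| ^ p) := by
      apply Real.measurable_exp.comp
      apply Measurable.div measurable_const
      exact ((Real.continuous_rpow_const hp.le).comp continuous_abs).measurable
    exact (Measurable.ite (measurableSet_eq_fun measurable_snd measurable_const)
      measurable_const (hmeas.comp measurable_snd))

lemma int_rpow_prod {r₁ r₂ : ℝ} (hr₁ : 0 < r₁) (hr₂ : 0 < r₂) {t u : ℝ}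
    (ht : -1 < t) (hu : -1 < u) :
    IntegrableOn (fun z : ℝ × ℝ => z.1 ^ t * z.2 ^ u) (Icc (0:ℝ) r₁ ×ˢ Icc (0:ℝ) r₂) volume := by
  have h1 : IntegrableOn (fun x : ℝ => x ^ t) (Icc (0:ℝ) r₁) volume := by
    rw [integrableOn_Icc_iff_integrableOn_Ioc]
    have := intervalIntegral.intervalIntegrable_rpow' (a := 0) (b := r₁) ht
    rwa [intervalIntegrable_iff_integrableOn_Ioc_of_le hr₁.le] at this
  have h2 : IntegrableOn (fun x : ℝ => x ^ u) (Icc (0:ℝ) r₂) volume := by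
    rw [integrableOn_Icc_iff_integrableOn_Ioc]
    have := intervalIntegral.intervalIntegrable_rpow' (a := 0) (b := r₂) hu
    rwa [intervalIntegrable_iff_integrableOn_Ioc_of_le hr₂.le] at this
  have h := h1.mul_prod h2
  rw [Measure.prod_restrict] at h
  exact h

end Stmt14Aux

open Stmt14Aux Metric in
/-- For `f(x,y) = x^a y^b + x^{a-q} y^b exp(-1/|y|^p)` one has the pointwise bound
`|f(x,y)|^{Re s} ≤ x^{a Re s} y^{b Re s}` for `x, y > 0` and `Re s ≤ 0`; consequently
the local zeta integral `∫_V |f|^s x^α y^β dxdy` over `V = [0,r₁]×[0,r₂]` converges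
absolutely on the half-plane `Re s > max(-(α+1)/a, -(β+1)/b)` and defines a
holomorphic function there. -/
theorem stmt14 (a b q : ℕ) (ha : 2 ≤ a) (hab : a ≤ b) (hq : Even q) (hq2 : 2 ≤ q)
    (hqa : q ≤ a) (p : ℝ) (hp : 0 < p) (r₁ r₂ : ℝ) (hr₁ : r₁ ∈ Ioo (0 : ℝ) 1)
    (hr₂ : r₂ ∈ Ioo (0 : ℝ) 1) (α β : ℕ) :
    (∀ x y : ℝ, 0 < x → 0 < y → ∀ s : ℂ, s.re ≤ 0 →
      |fC a b q p x y| ^ s.re ≤ x ^ ((a : ℝ) * s.re) * y ^ ((b : ℝ) * s.re)) ∧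
    (∀ s : ℂ, max (-((α : ℝ) + 1) / a) (-((β : ℝ) + 1) / b) < s.re →
      IntegrableOn
        (fun z : ℝ × ℝ =>
          ((|fC a b q p z.1 z.2| : ℝ) : ℂ) ^ s * ((z.1 ^ α * z.2 ^ β : ℝ) : ℂ))
        (Icc 0 r₁ ×ˢ Icc 0 r₂) volume) ∧
    DifferentiableOn ℂ
      (fun s : ℂ => ∫ z in Icc (0 : ℝ) r₁ ×ˢ Icc (0 : ℝ) r₂,
        ((|fC a b q p z.1 z.2| : ℝ) : ℂ) ^ s * ((z.1 ^ α * z.2 ^ β : ℝ) : ℂ))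
      {s : ℂ | max (-((α : ℝ) + 1) / a) (-((β : ℝ) + 1) / b) < s.re} := by
  have ha0 : (0:ℝ) < a := by
    have : 0 < a := by omega
    exact_mod_cast this
  have hb0 : (0:ℝ) < b := by
    have : 0 < b := by omega
    exact_mod_cast this
  set m : ℝ := max (-((α : ℝ) + 1) / a) (-((β : ℝ) + 1) / b) with hmdef
  have hm0 : m < 0 := by
    apply max_lt
    · apply div_neg_of_neg_of_pos _ ha0
      have : (0:ℝ) ≤ α := Nat.cast_nonneg α
      linarith
    · apply div_neg_of_neg_of_pos _ hb0
      have : (0:ℝ) ≤ β := Nat.cast_nonneg β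
      linarith
  -- Part 1 : the pointwise bound
  have part1 : ∀ x y : ℝ, 0 < x → 0 < y → ∀ s : ℂ, s.re ≤ 0 →
      |fC a b q p x y| ^ s.re ≤ x ^ ((a : ℝ) * s.re) * y ^ ((b : ℝ) * s.re) := by
    intro x y hx hy s hs
    rw [abs_of_pos (fC_pos a b q p hx hy)]
    have h1 : fC a b q p x y ^ s.re ≤ (x ^ a * y ^ b) ^ s.re :=
      Real.rpow_le_rpow_of_nonpos (by positivity) (fC_lower a b q p hx.le hy.le) hs
    rw [Real.mul_rpow (by positivity) (by positivity), ← Real.rpow_natCast x a,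
      ← Real.rpow_natCast y b, ← Real.rpow_mul hx.le, ← Real.rpow_mul hy.le] at h1
    exact h1
  -- a.e. positivity on the rectangle
  have hSmeas : MeasurableSet (Icc (0:ℝ) r₁ ×ˢ Icc (0:ℝ) r₂) :=
    measurableSet_Icc.prod measurableSet_Icc
  have haeS : ∀ᵐ z : ℝ × ℝ ∂(volume.restrict (Icc (0:ℝ) r₁ ×ˢ Icc (0:ℝ) r₂)),
      (0 < z.1 ∧ z.1 ≤ r₁) ∧ (0 < z.2 ∧ z.2 ≤ r₂) := by
    have h0 : ∀ᵐ z : ℝ × ℝ ∂volume, ¬(z.1 = 0 ∨ z.2 = 0) := by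
      rw [ae_iff]
      have hset : {z : ℝ × ℝ | ¬¬(z.1 = 0 ∨ z.2 = 0)} = {z : ℝ × ℝ | z.1 = 0 ∨ z.2 = 0} := by
        ext z; exact not_not
      rw [hset]
      have hsub : {z : ℝ × ℝ | z.1 = 0 ∨ z.2 = 0} ⊆
          (({0} : Set ℝ) ×ˢ (univ : Set ℝ)) ∪ ((univ : Set ℝ) ×ˢ ({0} : Set ℝ)) := by
        rintro z (h | h)
        · exact Or.inl ⟨h, trivial⟩
        · exact Or.inr ⟨trivial, h⟩
      refine measure_mono_null hsub (measure_union_null ?_ ?_)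
      · rw [show (volume : Measure (ℝ × ℝ)) = (volume : Measure ℝ).prod volume from rfl,
          Measure.prod_prod, Real.volume_singleton, zero_mul]
      · rw [show (volume : Measure (ℝ × ℝ)) = (volume : Measure ℝ).prod volume from rfl,
          Measure.prod_prod, Real.volume_singleton, mul_zero]
    filter_upwards [ae_restrict_of_ae h0, ae_restrict_mem hSmeas] with z hz hzS
    push_neg at hz
    rcases hzS with ⟨⟨h10, h11⟩, ⟨h20, h21⟩⟩
    exact ⟨⟨lt_of_le_of_ne h10 (Ne.symm hz.1), h11⟩, ⟨lt_of_le_of_ne h20 (Ne.symm hz.2), h21⟩⟩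
  -- measurability of the integrand
  have hFmeas : ∀ s : ℂ, AEStronglyMeasurable
      (fun z : ℝ × ℝ => ((|fC a b q p z.1 z.2| : ℝ) : ℂ) ^ s * ((z.1 ^ α * z.2 ^ β : ℝ) : ℂ))
      (volume.restrict (Icc (0:ℝ) r₁ ×ˢ Icc (0:ℝ) r₂)) := by
    intro s
    have hg : Measurable fun z : ℝ × ℝ =>
        Complex.exp ((Real.log |fC a b q p z.1 z.2| : ℂ) * s) * ((z.1 ^ α * z.2 ^ β : ℝ) : ℂ) := by
      apply Measurable.mul
      · exact Complex.measurable_exp.comp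
          ((Complex.measurable_ofReal.comp (Real.measurable_log.comp
            (fC_meas a b q p hp).abs)).mul_const s)
      · exact Complex.measurable_ofReal.comp
          ((measurable_fst.pow_const α).mul (measurable_snd.pow_const β))
    refine (hg.aestronglyMeasurable).congr ?_
    filter_upwards [haeS] with z hz
    rcases hz with ⟨⟨hx, _⟩, ⟨hy, _⟩⟩
    have hc : (0:ℝ) < |fC a b q p z.1 z.2| := abs_pos.mpr (fC_pos a b q p hx hy).ne'
    have hc0 : ((|fC a b q p z.1 z.2| : ℝ) : ℂ) ≠ 0 := by
      exact_mod_cast hc.ne'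
    rw [Complex.cpow_def_of_ne_zero hc0, Complex.ofReal_log (abs_nonneg _)]
  -- separable rpow identity
  have hsplit : ∀ τ : ℝ, ∀ x y : ℝ, 0 < x → 0 < y →
      (x ^ a * y ^ b) ^ τ * (x ^ α * y ^ β) =
        x ^ ((a:ℝ) * τ + α) * y ^ ((b:ℝ) * τ + β) := by
    intro τ x y hx hy
    rw [Real.mul_rpow (by positivity) (by positivity), ← Real.rpow_natCast x a,
      ← Real.rpow_natCast y b, ← Real.rpow_natCast x α, ← Real.rpow_natCast y β,
      ← Real.rpow_mul hx.le, ← Real.rpow_mul hy.le, Real.rpow_add hx, Real.rpow_add hy]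
    ring
  -- uniform cpow bound
  have key : ∀ σ τ : ℝ, τ ≤ σ → τ ≤ 0 → ∀ x y : ℝ, 0 < x → x ≤ r₁ → 0 < y → y ≤ r₂ →
      |fC a b q p x y| ^ σ ≤ max 1 (2 ^ σ) * (x ^ a * y ^ b) ^ τ := by
    intro σ τ hτσ hτ0 x y hx hxr hy hyr
    have hx1 : x ≤ 1 := hxr.trans hr₁.2.le
    have hy1 : y ≤ 1 := hyr.trans hr₂.2.le
    have hfpos : 0 < fC a b q p x y := fC_pos a b q p hx hy
    have hbpos : (0:ℝ) < x ^ a * y ^ b := by positivity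
    have hble : x ^ a * y ^ b ≤ 1 :=
      mul_le_one₀ (pow_le_one₀ hx.le hx1) (pow_nonneg hy.le _) (pow_le_one₀ hy.le hy1)
    have hle2 : |fC a b q p x y| ≤ 2 := by
      rw [abs_of_pos hfpos]; exact fC_le_two a b q p hx.le hx1 hy.le hy1
    rw [abs_of_pos hfpos]
    rcases le_or_gt σ 0 with hσ | hσ
    · calc fC a b q p x y ^ σ ≤ (x ^ a * y ^ b) ^ σ :=
            Real.rpow_le_rpow_of_nonpos hbpos (fC_lower a b q p hx.le hy.le) hσ
        _ ≤ (x ^ a * y ^ b) ^ τ :=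
            Real.rpow_le_rpow_of_exponent_ge hbpos hble hτσ
        _ ≤ max 1 (2 ^ σ) * (x ^ a * y ^ b) ^ τ :=
            le_mul_of_one_le_left (Real.rpow_nonneg hbpos.le _) (le_max_left _ _)
    · calc fC a b q p x y ^ σ ≤ 2 ^ σ := by
            rw [← abs_of_pos hfpos]
            exact Real.rpow_le_rpow (abs_nonneg _) hle2 hσ.le
        _ ≤ max 1 (2 ^ σ) := le_max_right _ _
        _ ≤ max 1 (2 ^ σ) * (x ^ a * y ^ b) ^ τ :=
            le_mul_of_one_le_right (le_trans zero_le_one (le_max_left _ _))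
              (Real.one_le_rpow_of_pos_of_le_one_of_nonpos hbpos hble hτ0)
  -- exponent positivity
  have hexp : ∀ τ : ℝ, m < τ → -1 < (a:ℝ) * τ + α ∧ -1 < (b:ℝ) * τ + β := by
    intro τ hτ
    constructor
    · have h1 : -((α : ℝ) + 1) / a < τ := lt_of_le_of_lt (le_max_left _ _) hτ
      rw [div_lt_iff₀ ha0] at h1
      nlinarith
    · have h1 : -((β : ℝ) + 1) / b < τ := lt_of_le_of_lt (le_max_right _ _) hτ
      rw [div_lt_iff₀ hb0] at h1
      nlinarith
  -- Part 2 : integrability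
  have part2 : ∀ s : ℂ, m < s.re →
      IntegrableOn
        (fun z : ℝ × ℝ =>
          ((|fC a b q p z.1 z.2| : ℝ) : ℂ) ^ s * ((z.1 ^ α * z.2 ^ β : ℝ) : ℂ))
        (Icc 0 r₁ ×ˢ Icc 0 r₂) volume := by
    intro s hs
    set τ : ℝ := min s.re 0 with hτdef
    have hτm : m < τ := lt_min hs hm0
    obtain ⟨he₁, he₂⟩ := hexp τ hτm
    refine Integrable.mono'
      ((int_rpow_prod hr₁.1 hr₂.1 he₁ he₂).const_mul (max 1 (2 ^ s.re))) (hFmeas s) ?_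
    filter_upwards [haeS] with z hz
    rcases hz with ⟨⟨hx, hxr⟩, ⟨hy, hyr⟩⟩
    have hc : (0:ℝ) < |fC a b q p z.1 z.2| := abs_pos.mpr (fC_pos a b q p hx hy).ne'
    have hk : (0:ℝ) ≤ z.1 ^ α * z.2 ^ β := by positivity
    rw [norm_mul, Complex.norm_cpow_eq_rpow_re_of_pos hc,
      Complex.norm_real, Real.norm_eq_abs, abs_of_nonneg hk]
    calc |fC a b q p z.1 z.2| ^ s.re * (z.1 ^ α * z.2 ^ β)
        ≤ max 1 (2 ^ s.re) * (z.1 ^ a * z.2 ^ b) ^ τ * (z.1 ^ α * z.2 ^ β) :=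
          mul_le_mul_of_nonneg_right
            (key s.re τ (min_le_left _ _) (min_le_right _ _) z.1 z.2 hx hxr hy hyr) hk
      _ = max 1 (2 ^ s.re) * (z.1 ^ ((a:ℝ) * τ + α) * z.2 ^ ((b:ℝ) * τ + β)) := by
          rw [mul_assoc, hsplit τ z.1 z.2 hx hy]
  refine ⟨part1, part2, ?_⟩
  -- Part 3 : holomorphy
  intro s₀ hs₀
  simp only [mem_setOf_eq, ← hmdef] at hs₀
  set ε : ℝ := (s₀.re - m) / 2 with hεdef
  have hε : 0 < ε := by rw [hεdef]; linarith
  set τ : ℝ := min (s₀.re - ε) 0 with hτdef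
  have hτm : m < τ := by
    apply lt_min _ hm0
    rw [hεdef]; linarith
  have hτ0 : τ ≤ 0 := min_le_right _ _
  obtain ⟨he₁, he₂⟩ := hexp τ hτm
  set δ : ℝ := min ((a:ℝ) * τ + α + 1) ((b:ℝ) * τ + β + 1) / 2 with hδdef
  have hδ0 : 0 < δ := by
    rw [hδdef]
    apply div_pos _ two_pos
    exact lt_min (by linarith) (by linarith)
  have hδ1 : -1 < (a:ℝ) * τ + α - δ := by
    have h1 := min_le_left ((a:ℝ) * τ + α + 1) ((b:ℝ) * τ + β + 1)
    rw [hδdef] at *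
    linarith
  have hδ2 : -1 < (b:ℝ) * τ + β - δ := by
    have h1 := min_le_right ((a:ℝ) * τ + α + 1) ((b:ℝ) * τ + β + 1)
    rw [hδdef] at *
    linarith
  set M : ℝ := max 1 (2 ^ (s₀.re + ε)) with hMdef
  have hM1 : (1:ℝ) ≤ M := le_max_left _ _
  have hM0 : (0:ℝ) ≤ M := zero_le_one.trans hM1
  set bnd : ℝ × ℝ → ℝ := fun z =>
    M * Real.log 2 * (z.1 ^ ((a:ℝ) * τ + α) * z.2 ^ ((b:ℝ) * τ + β))
    + M * a / δ * (z.1 ^ ((a:ℝ) * τ + α - δ) * z.2 ^ ((b:ℝ) * τ + β))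
    + M * b / δ * (z.1 ^ ((a:ℝ) * τ + α) * z.2 ^ ((b:ℝ) * τ + β - δ)) with hbnddef
  have hbnd_int : Integrable bnd (volume.restrict (Icc (0:ℝ) r₁ ×ˢ Icc (0:ℝ) r₂)) := by
    rw [hbnddef]
    exact (((int_rpow_prod hr₁.1 hr₂.1 he₁ he₂).const_mul _).add
      ((int_rpow_prod hr₁.1 hr₂.1 hδ1 he₂).const_mul _)).add
      ((int_rpow_prod hr₁.1 hr₂.1 he₁ hδ2).const_mul _)
  have hF'meas : AEStronglyMeasurable
      (fun z : ℝ × ℝ => ((|fC a b q p z.1 z.2| : ℝ) : ℂ) ^ s₀ *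
        Complex.log ((|fC a b q p z.1 z.2| : ℝ) : ℂ) * ((z.1 ^ α * z.2 ^ β : ℝ) : ℂ))
      (volume.restrict (Icc (0:ℝ) r₁ ×ˢ Icc (0:ℝ) r₂)) := by
    have hlogm : Measurable fun z : ℝ × ℝ => (Real.log |fC a b q p z.1 z.2| : ℂ) :=
      Complex.measurable_ofReal.comp (Real.measurable_log.comp (fC_meas a b q p hp).abs)
    have hg : Measurable fun z : ℝ × ℝ =>
        Complex.exp ((Real.log |fC a b q p z.1 z.2| : ℂ) * s₀) *
          (Real.log |fC a b q p z.1 z.2| : ℂ) * ((z.1 ^ α * z.2 ^ β : ℝ) : ℂ) :=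
      ((Complex.measurable_exp.comp (hlogm.mul_const s₀)).mul hlogm).mul
        (Complex.measurable_ofReal.comp
          ((measurable_fst.pow_const α).mul (measurable_snd.pow_const β)))
    refine hg.aestronglyMeasurable.congr ?_
    filter_upwards [haeS] with z hz
    rcases hz with ⟨⟨hx, _⟩, ⟨hy, _⟩⟩
    have hc : (0:ℝ) < |fC a b q p z.1 z.2| := abs_pos.mpr (fC_pos a b q p hx hy).ne'
    have hc0 : ((|fC a b q p z.1 z.2| : ℝ) : ℂ) ≠ 0 := by exact_mod_cast hc.ne'
    rw [Complex.cpow_def_of_ne_zero hc0, Complex.ofReal_log (abs_nonneg _)]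
  -- the uniform bound on the derivative
  have hbound : ∀ᵐ z : ℝ × ℝ ∂(volume.restrict (Icc (0:ℝ) r₁ ×ˢ Icc (0:ℝ) r₂)),
      ∀ s ∈ ball s₀ ε,
        ‖((|fC a b q p z.1 z.2| : ℝ) : ℂ) ^ s *
          Complex.log ((|fC a b q p z.1 z.2| : ℝ) : ℂ) * ((z.1 ^ α * z.2 ^ β : ℝ) : ℂ)‖
          ≤ bnd z := by
    filter_upwards [haeS] with z hz s hsball
    rcases hz with ⟨⟨hx, hxr⟩, ⟨hy, hyr⟩⟩
    set c : ℝ := |fC a b q p z.1 z.2| with hcdef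
    have hx1 : z.1 ≤ 1 := hxr.trans hr₁.2.le
    have hy1 : z.2 ≤ 1 := hyr.trans hr₂.2.le
    have hfpos : 0 < fC a b q p z.1 z.2 := fC_pos a b q p hx hy
    have hc : (0:ℝ) < c := abs_pos.mpr hfpos.ne'
    have hk : (0:ℝ) ≤ z.1 ^ α * z.2 ^ β := by positivity
    have hbpos : (0:ℝ) < z.1 ^ a * z.2 ^ b := by positivity
    have hble : z.1 ^ a * z.2 ^ b ≤ 1 :=
      mul_le_one₀ (pow_le_one₀ hx.le hx1) (pow_nonneg hy.le _) (pow_le_one₀ hy.le hy1)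
    -- position of s.re
    have hsre : τ ≤ s.re ∧ s.re ≤ s₀.re + ε := by
      rw [mem_ball, Complex.dist_eq] at hsball
      have habs : |s.re - s₀.re| < ε :=
        lt_of_le_of_lt (by rw [← Complex.sub_re]; exact Complex.abs_re_le_norm _) hsball
      rw [abs_lt] at habs
      constructor
      · have := min_le_left (s₀.re - ε) (0:ℝ)
        rw [hτdef]
        have : min (s₀.re - ε) 0 ≤ s₀.re - ε := min_le_left _ _
        linarith
      · linarith
    -- norm computation
    rw [norm_mul, norm_mul, Complex.norm_cpow_eq_rpow_re_of_pos hc,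
      ← Complex.ofReal_log (abs_nonneg _), Complex.norm_real, Real.norm_eq_abs,
      Complex.norm_real, Real.norm_eq_abs, abs_of_nonneg hk]
    -- bound on the power factor
    have hcσ : c ^ s.re ≤ M * (z.1 ^ a * z.2 ^ b) ^ τ := by
      refine le_trans (key s.re τ hsre.1 hτ0 z.1 z.2 hx hxr hy hyr) ?_
      apply mul_le_mul_of_nonneg_right _ (Real.rpow_nonneg hbpos.le _)
      rw [hMdef]
      exact max_le_max le_rfl (Real.rpow_le_rpow_of_exponent_le one_le_two hsre.2)
    -- bound on the log factor
    have hle2 : c ≤ 2 := by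
      rw [hcdef, abs_of_pos hfpos]; exact fC_le_two a b q p hx.le hx1 hy.le hy1
    have hlogx : -Real.log z.1 ≤ z.1 ^ (-δ) / δ := by
      have h := Real.log_le_rpow_div (inv_nonneg.mpr hx.le) hδ0
      rw [Real.log_inv, Real.inv_rpow hx.le, ← Real.rpow_neg hx.le] at h
      exact h
    have hlogy : -Real.log z.2 ≤ z.2 ^ (-δ) / δ := by
      have h := Real.log_le_rpow_div (inv_nonneg.mpr hy.le) hδ0
      rw [Real.log_inv, Real.inv_rpow hy.le, ← Real.rpow_neg hy.le] at h
      exact h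
    have hlogb : |Real.log c|
        ≤ Real.log 2 + ((a:ℝ) * z.1 ^ (-δ) + (b:ℝ) * z.2 ^ (-δ)) / δ := by
      have hup : Real.log c ≤ Real.log 2 := Real.log_le_log hc hle2
      have hlow : Real.log (z.1 ^ a * z.2 ^ b) ≤ Real.log c := by
        apply Real.log_le_log hbpos
        rw [hcdef, abs_of_pos hfpos]
        exact fC_lower a b q p hx.le hy.le
      have hlogsplit : Real.log (z.1 ^ a * z.2 ^ b)
          = (a:ℝ) * Real.log z.1 + (b:ℝ) * Real.log z.2 := by
        rw [Real.log_mul (pow_ne_zero a hx.ne') (pow_ne_zero b hy.ne'),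
          Real.log_pow, Real.log_pow]
      have h1 : (a:ℝ) * (-Real.log z.1) ≤ (a:ℝ) * (z.1 ^ (-δ) / δ) :=
        mul_le_mul_of_nonneg_left hlogx ha0.le
      have h2 : (b:ℝ) * (-Real.log z.2) ≤ (b:ℝ) * (z.2 ^ (-δ) / δ) :=
        mul_le_mul_of_nonneg_left hlogy hb0.le
      have hdiv : ((a:ℝ) * z.1 ^ (-δ) + (b:ℝ) * z.2 ^ (-δ)) / δ
          = (a:ℝ) * (z.1 ^ (-δ) / δ) + (b:ℝ) * (z.2 ^ (-δ) / δ) := by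
        field_simp
      have hS0 : 0 ≤ ((a:ℝ) * z.1 ^ (-δ) + (b:ℝ) * z.2 ^ (-δ)) / δ := by positivity
      have hlog2 : (0:ℝ) ≤ Real.log 2 := Real.log_nonneg one_le_two
      rw [abs_le]
      constructor
      · rw [hdiv]
        rw [hlogsplit] at hlow
        linarith
      · linarith
    calc c ^ s.re * |Real.log c| * (z.1 ^ α * z.2 ^ β)
        ≤ (M * (z.1 ^ a * z.2 ^ b) ^ τ) *
            (Real.log 2 + ((a:ℝ) * z.1 ^ (-δ) + (b:ℝ) * z.2 ^ (-δ)) / δ) *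
            (z.1 ^ α * z.2 ^ β) := by
          apply mul_le_mul_of_nonneg_right _ hk
          exact mul_le_mul hcσ hlogb (abs_nonneg _) (by positivity)
      _ = bnd z := by
          have hBk := hsplit τ z.1 z.2 hx hy
          have hxs : z.1 ^ ((a:ℝ) * τ + α - δ) = z.1 ^ ((a:ℝ) * τ + α) * z.1 ^ (-δ) := by
            rw [← Real.rpow_add hx]; ring_nf
          have hys : z.2 ^ ((b:ℝ) * τ + β - δ) = z.2 ^ ((b:ℝ) * τ + β) * z.2 ^ (-δ) := by
            rw [← Real.rpow_add hy]; ring_nf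
          rw [hbnddef]
          simp only
          rw [hxs, hys]
          have : (M * (z.1 ^ a * z.2 ^ b) ^ τ) *
              (Real.log 2 + ((a:ℝ) * z.1 ^ (-δ) + (b:ℝ) * z.2 ^ (-δ)) / δ) *
              (z.1 ^ α * z.2 ^ β)
              = M * (Real.log 2 + ((a:ℝ) * z.1 ^ (-δ) + (b:ℝ) * z.2 ^ (-δ)) / δ) *
                ((z.1 ^ a * z.2 ^ b) ^ τ * (z.1 ^ α * z.2 ^ β)) := by ring
          rw [this, hBk]
          field_simp
          ring
  -- differentiability of the integrand in s
  have hdiff : ∀ᵐ z : ℝ × ℝ ∂(volume.restrict (Icc (0:ℝ) r₁ ×ˢ Icc (0:ℝ) r₂)),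
      ∀ s ∈ ball s₀ ε,
        HasDerivAt (fun s : ℂ =>
            ((|fC a b q p z.1 z.2| : ℝ) : ℂ) ^ s * ((z.1 ^ α * z.2 ^ β : ℝ) : ℂ))
          (((|fC a b q p z.1 z.2| : ℝ) : ℂ) ^ s *
            Complex.log ((|fC a b q p z.1 z.2| : ℝ) : ℂ) * ((z.1 ^ α * z.2 ^ β : ℝ) : ℂ)) s := by
    filter_upwards [haeS] with z hz s _
    rcases hz with ⟨⟨hx, _⟩, ⟨hy, _⟩⟩
    have hc : (0:ℝ) < |fC a b q p z.1 z.2| := abs_pos.mpr (fC_pos a b q p hx hy).ne'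
    have hc0 : ((|fC a b q p z.1 z.2| : ℝ) : ℂ) ≠ 0 := by exact_mod_cast hc.ne'
    have h := ((hasDerivAt_id s).const_cpow (c := ((|fC a b q p z.1 z.2| : ℝ) : ℂ))
      (Or.inl hc0)).mul_const ((z.1 ^ α * z.2 ^ β : ℝ) : ℂ)
    simpa using h
  have hmain := hasDerivAt_integral_of_dominated_loc_of_deriv_le (𝕜 := ℂ)
    (μ := volume.restrict (Icc (0:ℝ) r₁ ×ˢ Icc (0:ℝ) r₂))
    (F := fun s (z : ℝ × ℝ) =>
      ((|fC a b q p z.1 z.2| : ℝ) : ℂ) ^ s * ((z.1 ^ α * z.2 ^ β : ℝ) : ℂ))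
    (F' := fun s (z : ℝ × ℝ) =>
      ((|fC a b q p z.1 z.2| : ℝ) : ℂ) ^ s *
        Complex.log ((|fC a b q p z.1 z.2| : ℝ) : ℂ) * ((z.1 ^ α * z.2 ^ β : ℝ) : ℂ))
    (x₀ := s₀) (bound := bnd) (ball_mem_nhds s₀ hε)
    (Filter.Eventually.of_forall hFmeas) (part2 s₀ hs₀) hF'meas hbound hbnd_int hdiff
  exact hmain.2.differentiableAt.differentiableWithinAt
end

section
/- Let p, q > 0 with q an even integer, δ > (p+1)/q, and define Ψ(x, y; s) = (1 + x^{-q} exp(-1/|y|^p))^s on the region U = {(x,y) : 0 < x ≤ r₁, 0 ≤ y ≤ r₂, x^q ≥ y^{-qδ} exp(-1/|y|^p)} (excluding the origin), for s ∈ ℂ. Then Ψ(·; s) extends continuously to U ∪ {(0,0)} with value 1 at the origin, and moreover ∂Ψ/∂y(x, y; s) = p s x^{-q} y^{-p-1} exp(-1/|y|^p) Ψ(x, y; s-1) extends continuously to the origin with limit 0. -/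
open MeasureTheory Set Filter

/-- The flat function `y ↦ exp(-1/|y|^p)`, vanishing at `y = 0`. -/
noncomputable def Eflat (p : ℝ) (y : ℝ) : ℝ :=
  if y = 0 then 0 else Real.exp (-1 / |y| ^ p)

/-- `Ψ(x,y;s) = (1 + x^{-q} exp(-1/|y|^p))^s`. -/
noncomputable def PsiFun (p : ℝ) (q : ℕ) (s : ℂ) (z : ℝ × ℝ) : ℂ :=
  ((1 + z.1 ^ (-(q : ℝ)) * Eflat p z.2 : ℝ) : ℂ) ^ s

/-- The region `U₁ = {(x,y) : 0 < x ≤ r₁, 0 ≤ y ≤ r₂, x^q ≥ y^{-qδ} exp(-1/|y|^p)}`. -/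
def UReg (p : ℝ) (q : ℕ) (δ r₁ r₂ : ℝ) : Set (ℝ × ℝ) :=
  {z | 0 < z.1 ∧ z.1 ≤ r₁ ∧ 0 ≤ z.2 ∧ z.2 ≤ r₂ ∧
    Eflat p z.2 ≤ z.1 ^ q * z.2 ^ ((q : ℝ) * δ)}

/-- On `U₁` with `δ > (p+1)/q`, the function `Ψ(·;s)` extends continuously to the
origin with value `1`; moreover its `y`-derivative is
`p s x^{-q} y^{-p-1} exp(-1/|y|^p) Ψ(x,y;s-1)`, and this extends continuously to
the origin with limit `0`. -/
theorem stmt15 (p : ℝ) (hp : 0 < p) (q : ℕ) (hq : Even q) (hq0 : 0 < q)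
    (δ r₁ r₂ : ℝ) (hδ : (p + 1) / q < δ) (hr₁ : 0 < r₁) (hr₂ : 0 < r₂) (s : ℂ) :
    Tendsto (fun z : ℝ × ℝ => PsiFun p q s z)
      (nhdsWithin (0, 0) (UReg p q δ r₁ r₂)) (nhds 1) ∧
    (∀ z ∈ UReg p q δ r₁ r₂, 0 < z.2 →
      HasDerivAt (fun y : ℝ => PsiFun p q s (z.1, y))
        ((p : ℂ) * s * ((z.1 ^ (-(q : ℝ)) * z.2 ^ (-p - 1) * Eflat p z.2 : ℝ) : ℂ) *
          PsiFun p q (s - 1) z) z.2) ∧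
    Tendsto
      (fun z : ℝ × ℝ =>
        (p : ℂ) * s * ((z.1 ^ (-(q : ℝ)) * z.2 ^ (-p - 1) * Eflat p z.2 : ℝ) : ℂ) *
          PsiFun p q (s - 1) z)
      (nhdsWithin (0, 0) (UReg p q δ r₁ r₂)) (nhds 0) := by
  have hqR : (0 : ℝ) < (q : ℝ) := by exact_mod_cast hq0
  have hqδ : p + 1 < (q : ℝ) * δ := by
    have := (div_lt_iff₀ hqR).mp hδ
    linarith
  have hE0 : Eflat p 0 = 0 := by simp [Eflat]
  have hδ0 : 0 < δ := lt_trans (div_pos (by linarith) hqR) hδ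
  have hEnn : ∀ y : ℝ, 0 ≤ Eflat p y := by
    intro y
    unfold Eflat
    split
    · exact le_rfl
    · exact (Real.exp_pos _).le
  -- key bound on U
  have hkey : ∀ z ∈ UReg p q δ r₁ r₂,
      z.1 ^ (-(q : ℝ)) * Eflat p z.2 ≤ z.2 ^ ((q : ℝ) * δ) := by
    rintro z ⟨hx, -, -, -, hE⟩
    have hxq : (0 : ℝ) < z.1 ^ q := pow_pos hx q
    have : z.1 ^ (-(q : ℝ)) = (z.1 ^ q)⁻¹ := by
      rw [Real.rpow_neg hx.le, Real.rpow_natCast]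
    rw [this, inv_mul_le_iff₀ hxq]
    exact hE
  have hbase_nn : ∀ z : ℝ × ℝ, 0 < z.1 → (1 : ℝ) ≤ 1 + z.1 ^ (-(q : ℝ)) * Eflat p z.2 := by
    intro z hx
    nlinarith [Real.rpow_nonneg hx.le (-(q : ℝ)), hEnn z.2,
      mul_nonneg (Real.rpow_nonneg hx.le (-(q : ℝ))) (hEnn z.2)]
  -- y tends to 0 along the filter
  have hy2 : Tendsto (fun z : ℝ × ℝ => z.2)
      (nhdsWithin (0, 0) (UReg p q δ r₁ r₂)) (nhds 0) :=
    (continuous_snd.tendsto ((0 : ℝ), (0 : ℝ))).mono_left nhdsWithin_le_nhds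
  -- the base tends to 1
  have hbase : Tendsto (fun z : ℝ × ℝ => 1 + z.1 ^ (-(q : ℝ)) * Eflat p z.2)
      (nhdsWithin (0, 0) (UReg p q δ r₁ r₂)) (nhds 1) := by
    have hupper : Tendsto (fun z : ℝ × ℝ => 1 + z.2 ^ ((q : ℝ) * δ))
        (nhdsWithin (0, 0) (UReg p q δ r₁ r₂)) (nhds 1) := by
      have hqδ0 : (0 : ℝ) < (q : ℝ) * δ := mul_pos hqR hδ0
      have h0 : (0 : ℝ) ^ ((q : ℝ) * δ) = 0 := Real.zero_rpow hqδ0.ne'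
      have hc : ContinuousAt (fun y : ℝ => (1 : ℝ) + y ^ ((q : ℝ) * δ)) 0 :=
        continuousAt_const.add
          (Real.continuousAt_rpow_const 0 _ (Or.inr hqδ0.le))
      have := hc.tendsto.comp hy2
      simpa [h0, Function.comp_def] using this
    refine tendsto_of_tendsto_of_tendsto_of_le_of_le' tendsto_const_nhds hupper ?_ ?_
    · filter_upwards [eventually_mem_nhdsWithin] with z hz
      exact hbase_nn z hz.1
    · filter_upwards [eventually_mem_nhdsWithin] with z hz
      exact add_le_add_right (hkey z hz) 1
  -- Psi tends to 1, for any s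
  have hPsi : ∀ t : ℂ, Tendsto (fun z : ℝ × ℝ => PsiFun p q t z)
      (nhdsWithin (0, 0) (UReg p q δ r₁ r₂)) (nhds 1) := by
    intro t
    have hc : ContinuousAt (fun r : ℝ => ((r : ℂ)) ^ t) 1 := by
      have h1 : ((1 : ℝ) : ℂ) ∈ Complex.slitPlane := by
        simp [Complex.mem_slitPlane_iff]
      exact (continuousAt_cpow_const h1).comp Complex.continuous_ofReal.continuousAt
    have h2 := hc.tendsto.comp hbase
    have h1e : ((1 : ℝ) : ℂ) ^ t = 1 := by norm_num
    rw [h1e] at h2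
    exact h2
  refine ⟨hPsi s, ?_, ?_⟩
  · -- derivative
    rintro z ⟨hx, -, -, -, -⟩ hy
    set y := z.2 with hy_def
    set x := z.1 with hx_def
    -- derivative of Eflat at y > 0
    have hyp : (0 : ℝ) < y ^ p := Real.rpow_pos_of_pos hy p
    have hE' : HasDerivAt (fun t : ℝ => Eflat p t)
        (p * y ^ (-p - 1) * Eflat p y) y := by
      have h1 : HasDerivAt (fun t : ℝ => t ^ p) (p * y ^ (p - 1)) y :=
        Real.hasDerivAt_rpow_const (Or.inl hy.ne')
      have h2 : HasDerivAt (fun t : ℝ => -(t ^ p)⁻¹)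
          (-(-(p * y ^ (p - 1)) / (y ^ p) ^ 2)) y := (h1.inv hyp.ne').neg
      have h3 := h2.exp
      have heq : (fun t : ℝ => Real.exp (-(t ^ p)⁻¹)) =ᶠ[nhds y] fun t => Eflat p t := by
        filter_upwards [eventually_gt_nhds hy] with t ht
        simp [Eflat, ht.ne', abs_of_pos ht, neg_div, one_div]
      have h4 := h3.congr_of_eventuallyEq heq.symm
      refine h4.congr_deriv ?_
      have hEy : Eflat p y = Real.exp (-(y ^ p)⁻¹) := by
        simp [Eflat, hy.ne', abs_of_pos hy, neg_div, one_div]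
      rw [hEy]
      have hpow : y ^ (p - 1) / (y ^ p) ^ 2 = y ^ (-p - 1) := by
        rw [div_eq_iff (pow_pos hyp 2).ne', sq, ← Real.rpow_add hy, ← Real.rpow_add hy]
        congr 1
        ring
      rw [neg_div, neg_neg, mul_div_assoc, hpow]
      ring
    -- derivative of the base
    have hb' : HasDerivAt (fun t : ℝ => 1 + x ^ (-(q : ℝ)) * Eflat p t)
        (x ^ (-(q : ℝ)) * (p * y ^ (-p - 1) * Eflat p y)) y :=
      (hE'.const_mul (x ^ (-(q : ℝ)))).const_add 1
    have hbC := hb'.ofReal_comp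
    have hslit : ((1 + x ^ (-(q : ℝ)) * Eflat p y : ℝ) : ℂ) ∈ Complex.slitPlane := by
      rw [Complex.mem_slitPlane_iff]
      left
      simp only [Complex.ofReal_re]
      have := hbase_nn z hx
      simpa [hx_def, hy_def] using lt_of_lt_of_le one_pos this
    have hcpow : HasDerivAt (fun w : ℂ => w ^ s)
        (s * ((1 + x ^ (-(q : ℝ)) * Eflat p y : ℝ) : ℂ) ^ (s - 1))
        ((1 + x ^ (-(q : ℝ)) * Eflat p y : ℝ) : ℂ) :=
      (Complex.hasStrictDerivAt_cpow_const hslit).hasDerivAt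
    have hD := (hcpow.hasFDerivAt.restrictScalars ℝ).comp_hasDerivAt y hbC
    have hfun : ((fun w : ℂ => w ^ s) ∘ fun t : ℝ => ((1 + x ^ (-(q : ℝ)) * Eflat p t : ℝ) : ℂ))
        = fun t : ℝ => PsiFun p q s (x, t) := rfl
    rw [hfun] at hD
    refine hD.congr_deriv ?_
    simp only [ContinuousLinearMap.coe_restrictScalars', ContinuousLinearMap.smulRight_apply, ContinuousLinearMap.toSpanSingleton_apply,
      ContinuousLinearMap.one_apply, one_smul, smul_eq_mul]
    have hPz : PsiFun p q (s - 1) z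
        = ((1 + x ^ (-(q : ℝ)) * Eflat p y : ℝ) : ℂ) ^ (s - 1) := rfl
    rw [hPz]
    push_cast
    ring
  · -- limit of the derivative expression
    have hF : Tendsto (fun z : ℝ × ℝ => z.1 ^ (-(q : ℝ)) * z.2 ^ (-p - 1) * Eflat p z.2)
        (nhdsWithin (0, 0) (UReg p q δ r₁ r₂)) (nhds 0) := by
      have hupper : Tendsto (fun z : ℝ × ℝ => z.2 ^ ((q : ℝ) * δ - p - 1))
          (nhdsWithin (0, 0) (UReg p q δ r₁ r₂)) (nhds 0) := by
        have h0 : (0 : ℝ) ^ ((q : ℝ) * δ - p - 1) = 0 :=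
          Real.zero_rpow (by linarith : ((q : ℝ) * δ - p - 1) ≠ 0)
        have hc : ContinuousAt (fun t : ℝ => t ^ ((q : ℝ) * δ - p - 1)) 0 :=
          Real.continuousAt_rpow_const 0 _ (Or.inr (by linarith))
        have := hc.tendsto.comp hy2
        simpa [h0, Function.comp_def] using this
      refine tendsto_of_tendsto_of_tendsto_of_le_of_le' tendsto_const_nhds hupper ?_ ?_
      · filter_upwards [eventually_mem_nhdsWithin] with z hz
        exact mul_nonneg (mul_nonneg (Real.rpow_nonneg hz.1.le _)
          (Real.rpow_nonneg hz.2.2.1 _)) (hEnn _)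
      · filter_upwards [eventually_mem_nhdsWithin] with z hz
        rcases eq_or_lt_of_le hz.2.2.1 with h0 | hy
        · rw [← h0, hE0, mul_zero]
          rw [Real.zero_rpow (by linarith : ((q : ℝ) * δ - p - 1) ≠ 0)]
        · have h1 : z.1 ^ (-(q : ℝ)) * z.2 ^ (-p - 1) * Eflat p z.2
              = z.1 ^ (-(q : ℝ)) * Eflat p z.2 * z.2 ^ (-p - 1) := by ring
          rw [h1]
          calc z.1 ^ (-(q : ℝ)) * Eflat p z.2 * z.2 ^ (-p - 1)
              ≤ z.2 ^ ((q : ℝ) * δ) * z.2 ^ (-p - 1) :=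
                mul_le_mul_of_nonneg_right (hkey z hz)
                  (Real.rpow_nonneg hz.2.2.1 _)
            _ = z.2 ^ ((q : ℝ) * δ - p - 1) := by
                rw [← Real.rpow_add hy]; ring_nf
    have hFC : Tendsto (fun z : ℝ × ℝ =>
        ((z.1 ^ (-(q : ℝ)) * z.2 ^ (-p - 1) * Eflat p z.2 : ℝ) : ℂ))
        (nhdsWithin (0, 0) (UReg p q δ r₁ r₂)) (nhds 0) := by
      have h2 := (Complex.continuous_ofReal.tendsto 0).comp hF
      simpa only [Complex.ofReal_zero, Function.comp_def] using h2
    have := ((tendsto_const_nhds (x := (p : ℂ) * s)).mul hFC).mul (hPsi (s - 1))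
    simpa [mul_assoc] using this
end

section
/- Let a, b, q be integers with 2 ≤ a ≤ b and q even, 2 ≤ q ≤ a, let p > 0, and V = [0,r₁]×[0,r₂] ⊂ ℝ² with r₁, r₂ ∈ (0,1) and r₂ sufficiently small. Fix δ > 0 and λ ∈ (0,1), and set e(y) = exp(-1/(q y^p))... Consider J₁(σ) = ∫₀^{ρ(λ r₁)} (∫₀^{e(y)/λ} x^{(a-q)σ} y^{bσ+β} e(y)^{qσ} dx) dy, where β is a nonnegative integer with β > b/a - 1 and ρ is the partial inverse of e capped at r₂. Then J₁(σ) = (λ^{-(X - qX/a + q/a)} / (X - qX/a + q/a)) ∫₀^{ρ(λ r₁)} y^{-b/a + β + bX/a} e(y)^X dy with X = aσ + 1, and the limit lim_{σ → -1/a⁺} J₁(σ) exists and is finite. -/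
open MeasureTheory Set Filter

/-- The flat function `e_{p,q}(y) = exp(-1/(q y^p))` for `y > 0`, and `0` for `y ≤ 0`. -/
noncomputable def epq (p : ℝ) (q : ℕ) (y : ℝ) : ℝ :=
  if y ≤ 0 then 0 else Real.exp (-1 / (q * y ^ p))

/-- The partial inverse of `e_{p,q}`, capped at `r₂`:
`ρ(x) = e_{p,q}⁻¹(x) = (q(-log x))^{-1/p}` for `0 < x < e_{p,q}(r₂)`, `ρ(x) = r₂`
for `x ≥ e_{p,q}(r₂)`, and `ρ(x) = 0` for `x ≤ 0`. -/
noncomputable def rhoInv (p : ℝ) (q : ℕ) (r₂ : ℝ) (x : ℝ) : ℝ :=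
  if x ≤ 0 then 0
  else if x < epq p q r₂ then ((q : ℝ) * (-Real.log x)) ^ (-1 / p) else r₂

/-- The integral
`J₁(σ) = ∫₀^{ρ(λ r₁)} ∫₀^{e(y)/λ} x^{(a-q)σ} y^{bσ+β} e(y)^{qσ} dx dy`. -/
noncomputable def J1 (a b q : ℕ) (p : ℝ) (lam r₁ r₂ : ℝ) (β : ℕ) (σ : ℝ) : ℝ :=
  ∫ y in (0 : ℝ)..(rhoInv p q r₂ (lam * r₁)),
    ∫ x in (0 : ℝ)..(epq p q y / lam),
      x ^ (((a : ℝ) - q) * σ) * y ^ ((b : ℝ) * σ + β) * epq p q y ^ ((q : ℝ) * σ)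

lemma epq_nonneg (p : ℝ) (q : ℕ) (y : ℝ) : 0 ≤ epq p q y := by
  unfold epq; split
  · exact le_rfl
  · exact (Real.exp_pos _).le

lemma epq_pos {p : ℝ} {q : ℕ} {y : ℝ} (hy : 0 < y) : 0 < epq p q y := by
  rw [epq, if_neg (not_le.2 hy)]; exact Real.exp_pos _

lemma epq_lt_one {p : ℝ} {q : ℕ} (hq : 0 < q) {y : ℝ} (hy : 0 < y) : epq p q y < 1 := by
  rw [epq, if_neg (not_le.2 hy)]
  apply Real.exp_lt_one_iff.mpr
  have h1 : 0 < (q : ℝ) * y ^ p := by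
    have := Real.rpow_pos_of_pos hy p
    positivity
  exact div_neg_of_neg_of_pos (by norm_num) h1

lemma epq_continuousOn {p : ℝ} (hp : 0 < p) (q : ℕ) (hq : 0 < q) :
    ContinuousOn (epq p q) (Ioi (0 : ℝ)) := by
  have h : ContinuousOn (fun y : ℝ => Real.exp (-1 / (q * y ^ p))) (Ioi (0 : ℝ)) := by
    apply Real.continuous_exp.comp_continuousOn
    apply ContinuousOn.div continuousOn_const
      (continuousOn_const.mul (Real.continuous_rpow_const hp.le).continuousOn)
    intro y hy
    have hyp : 0 < y ^ p := Real.rpow_pos_of_pos hy p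
    have hq' : (0 : ℝ) < q := by exact_mod_cast hq
    exact (mul_pos hq' hyp).ne'
  exact h.congr fun y hy => by rw [epq, if_neg (not_le.2 hy)]

lemma rhoInv_mem {p : ℝ} {q : ℕ} (hp : 0 < p) (hq : 0 < q) {r₂ x : ℝ} (hx0 : 0 < x)
    (hx1 : x < 1) (hr₂ : 0 < r₂) : rhoInv p q r₂ x ∈ Ioc (0 : ℝ) r₂ := by
  rw [rhoInv, if_neg (not_le.2 hx0)]
  have hlog : 0 < -Real.log x := by
    have := Real.log_neg hx0 hx1; linarith
  have hq' : (0 : ℝ) < q := by exact_mod_cast hq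
  split_ifs with h
  · constructor
    · apply Real.rpow_pos_of_pos; positivity
    · have hrpos : 0 < r₂ ^ p := Real.rpow_pos_of_pos hr₂ p
      have hlt : (1 : ℝ) / ((q : ℝ) * r₂ ^ p) < -Real.log x := by
        have h2 : Real.log x < -1 / ((q : ℝ) * r₂ ^ p) := by
          have := Real.log_lt_log hx0 h
          rwa [epq, if_neg (not_le.2 hr₂), Real.log_exp] at this
        have h3 : 0 < (q : ℝ) * r₂ ^ p := by positivity
        rw [neg_div] at h2; linarith
      have hrp : 0 < r₂ ^ (-p) := Real.rpow_pos_of_pos hr₂ _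
      have hle : r₂ ^ (-p) ≤ (q : ℝ) * (-Real.log x) := by
        have hrw : r₂ ^ (-p) = 1 / r₂ ^ p := by rw [Real.rpow_neg hr₂.le, one_div]
        rw [hrw]
        calc 1 / r₂ ^ p = (q : ℝ) * (1 / ((q : ℝ) * r₂ ^ p)) := by field_simp
          _ ≤ (q : ℝ) * (-Real.log x) := mul_le_mul_of_nonneg_left hlt.le hq'.le
      have hz : -1 / p ≤ 0 := by
        rw [neg_div]; exact neg_nonpos.mpr (by positivity)
      have key := Real.rpow_le_rpow_of_nonpos hrp hle hz
      calc ((q : ℝ) * (-Real.log x)) ^ (-1 / p) ≤ (r₂ ^ (-p)) ^ (-1 / p) := key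
        _ = r₂ ^ ((-p) * (-1 / p)) := (Real.rpow_mul hr₂.le _ _).symm
        _ = r₂ := by
            rw [show (-p) * (-1 / p) = 1 by field_simp, Real.rpow_one]
  · exact ⟨hr₂, le_rfl⟩

lemma J1_closed_form (a b q : ℕ) (ha : 2 ≤ a) (hq2 : 2 ≤ q) (hqa : q ≤ a)
    (p : ℝ) (lam r₁ r₂ : ℝ) (hlam : 0 < lam) (hR : 0 ≤ rhoInv p q r₂ (lam * r₁))
    (β : ℕ) (σ : ℝ) (hσ : σ ∈ Ioo (-1 / (a : ℝ)) 0) :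
    J1 a b q p lam r₁ r₂ β σ
      = lam ^ (-(((a : ℝ) - q) * σ + 1)) / (((a : ℝ) - q) * σ + 1) *
        ∫ y in (0 : ℝ)..(rhoInv p q r₂ (lam * r₁)),
          y ^ ((b : ℝ) * σ + β) * epq p q y ^ ((a : ℝ) * σ + 1) := by
  have ha' : (2 : ℝ) ≤ a := by exact_mod_cast ha
  have hqa' : (q : ℝ) ≤ a := by exact_mod_cast hqa
  have hq' : (0 : ℝ) < q := by positivity
  have haσ : -1 < (a : ℝ) * σ := by
    have := hσ.1
    rw [div_lt_iff₀ (by linarith : (0:ℝ) < a)] at this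
    nlinarith
  have hX : 0 < (a : ℝ) * σ + 1 := by linarith
  have hE : 0 < ((a : ℝ) - q) * σ + 1 := by nlinarith [hσ.2]
  have hs : -1 < ((a : ℝ) - q) * σ := by linarith
  rw [J1, ← intervalIntegral.integral_const_mul]
  apply intervalIntegral.integral_congr
  intro y hy
  rw [uIcc_of_le hR] at hy
  have hy0 : 0 ≤ y := hy.1
  simp only [mul_assoc]
  rw [intervalIntegral.integral_mul_const, integral_rpow (Or.inl hs),
    Real.zero_rpow hE.ne', sub_zero]
  rcases eq_or_lt_of_le hy0 with rfl | hy0'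
  · simp [epq, Real.zero_rpow hE.ne', Real.zero_rpow hX.ne']
  · have he : 0 < epq p q y := epq_pos hy0'
    have key : epq p q y ^ ((a : ℝ) * σ + 1)
        = epq p q y ^ ((q : ℝ) * σ) * epq p q y ^ (((a : ℝ) - q) * σ + 1) := by
      rw [← Real.rpow_add he]; congr 1; ring
    rw [Real.div_rpow (epq_nonneg p q y) hlam.le, Real.rpow_neg hlam.le, key]
    generalize epq p q y ^ ((q : ℝ) * σ) = Q
    generalize epq p q y ^ (((a : ℝ) - q) * σ + 1) = A
    generalize lam ^ (((a : ℝ) - q) * σ + 1) = L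
    generalize y ^ ((b : ℝ) * σ + (β : ℝ)) = Y
    ring

/-- For `β > b/a - 1`, the integral `J₁(σ)` has the closed form
`J₁(σ) = λ^{-(X - qX/a + q/a)}/(X - qX/a + q/a) ∫₀^{ρ(λ r₁)} y^{-b/a+β+bX/a} e(y)^X dy`
with `X = aσ + 1`, and the limit `lim_{σ → -1/a⁺} J₁(σ)` exists and is finite. -/
theorem stmt18 (a b q : ℕ) (ha : 2 ≤ a) (hab : a ≤ b) (hq : Even q) (hq2 : 2 ≤ q)
    (hqa : q ≤ a) (p : ℝ) (hp : 0 < p) (r₁ r₂ : ℝ) (hr₁ : r₁ ∈ Ioo (0 : ℝ) 1)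
    (hr₂ : r₂ ∈ Ioo (0 : ℝ) 1) (δ : ℝ) (hδ : 0 < δ) (lam : ℝ)
    (hlam : lam ∈ Ioo (0 : ℝ) 1) (β : ℕ) (hβ : (b : ℝ) / a - 1 < β) :
    (∀ σ ∈ Ioo (-1 / (a : ℝ)) 0,
      J1 a b q p lam r₁ r₂ β σ =
        lam ^ (-(((a : ℝ) * σ + 1) - q * ((a : ℝ) * σ + 1) / a + q / a)) /
            (((a : ℝ) * σ + 1) - q * ((a : ℝ) * σ + 1) / a + q / a) *
          ∫ y in (0 : ℝ)..(rhoInv p q r₂ (lam * r₁)),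
            y ^ (-(b : ℝ) / a + β + b * ((a : ℝ) * σ + 1) / a) *
              epq p q y ^ ((a : ℝ) * σ + 1)) ∧
    ∃ L : ℝ, Tendsto (fun σ => J1 a b q p lam r₁ r₂ β σ)
      (nhdsWithin (-1 / (a : ℝ)) (Ioo (-1 / (a : ℝ)) 0)) (nhds L) := by
  have ha' : (2 : ℝ) ≤ a := by exact_mod_cast ha
  have ha0 : (0 : ℝ) < a := by linarith
  have hq0 : 0 < q := by omega
  have hq' : (0 : ℝ) < q := by exact_mod_cast hq0
  have hqa' : (q : ℝ) ≤ a := by exact_mod_cast hqa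
  have hx0 : 0 < lam * r₁ := mul_pos hlam.1 hr₁.1
  have hx1 : lam * r₁ < 1 := by nlinarith [hlam.1, hlam.2, hr₁.1, hr₁.2]
  have hRmem := rhoInv_mem hp hq0 hx0 hx1 hr₂.1
  set R := rhoInv p q r₂ (lam * r₁) with hRdef
  have hR0 : 0 < R := hRmem.1
  have hR1 : R < 1 := lt_of_le_of_lt hRmem.2 hr₂.2
  -- closed form, in the statement's shape
  have hform : ∀ σ ∈ Ioo (-1 / (a : ℝ)) 0,
      J1 a b q p lam r₁ r₂ β σ =
        lam ^ (-(((a : ℝ) * σ + 1) - q * ((a : ℝ) * σ + 1) / a + q / a)) /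
            (((a : ℝ) * σ + 1) - q * ((a : ℝ) * σ + 1) / a + q / a) *
          ∫ y in (0 : ℝ)..R,
            y ^ (-(b : ℝ) / a + β + b * ((a : ℝ) * σ + 1) / a) *
              epq p q y ^ ((a : ℝ) * σ + 1) := by
    intro σ hσ
    have hEeq : ((a : ℝ) * σ + 1) - q * ((a : ℝ) * σ + 1) / a + q / a
        = ((a : ℝ) - q) * σ + 1 := by field_simp; ring
    have hbeq : -(b : ℝ) / a + β + b * ((a : ℝ) * σ + 1) / a = (b : ℝ) * σ + β := by
      field_simp; ring
    rw [hEeq, hbeq]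
    exact J1_closed_form a b q ha hq2 hqa p lam r₁ r₂ hlam.1 hR0.le β σ hσ
  refine ⟨hform, ?_⟩
  -- the limit
  set σ₀ : ℝ := -1 / (a : ℝ) with hσ₀def
  have hσ₀neg : σ₀ < 0 := by
    rw [hσ₀def, neg_div]; exact neg_neg_of_pos (by positivity)
  have hne : (nhdsWithin σ₀ (Ioo σ₀ 0)).NeBot := by
    rw [nhdsWithin_Ioo_eq_nhdsGT hσ₀neg]; infer_instance
  -- constant factor tends to a limit
  have hEσ₀ : ((a : ℝ) - q) * σ₀ + 1 = q / a := by
    rw [hσ₀def]; field_simp; ring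
  have hqa0 : (0 : ℝ) < q / a := by positivity
  have hc : Tendsto (fun σ : ℝ => lam ^ (-(((a : ℝ) - q) * σ + 1)) / (((a : ℝ) - q) * σ + 1))
      (nhdsWithin σ₀ (Ioo σ₀ 0)) (nhds (lam ^ (-((q : ℝ) / a)) / ((q : ℝ) / a))) := by
    have hcont : ContinuousAt
        (fun σ : ℝ => lam ^ (-(((a : ℝ) - q) * σ + 1)) / (((a : ℝ) - q) * σ + 1)) σ₀ := by
      apply ContinuousAt.div
      · exact (Real.continuousAt_const_rpow hlam.1.ne').comp
          (by fun_prop : ContinuousAt (fun σ : ℝ => -(((a : ℝ) - q) * σ + 1)) σ₀)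
      · fun_prop
      · rw [hEσ₀]; exact hqa0.ne'
    have := hcont.tendsto.mono_left (nhdsWithin_le_nhds (s := Ioo σ₀ 0))
    rwa [hEσ₀] at this
  -- the integral tends to a limit, by dominated convergence
  have hβ' : (-1 : ℝ) < -(b : ℝ) / a + β := by
    have : (b : ℝ) / a - 1 < β := hβ
    rw [neg_div]; linarith
  have hbnd_int : IntegrableOn (fun y : ℝ => y ^ (-(b : ℝ) / a + β)) (Ioc 0 R) volume := by
    exact (intervalIntegral.intervalIntegrable_rpow' hβ').1
  have hI : Tendsto (fun σ : ℝ => ∫ y in Ioc (0 : ℝ) R,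
        y ^ ((b : ℝ) * σ + β) * epq p q y ^ ((a : ℝ) * σ + 1))
      (nhdsWithin σ₀ (Ioo σ₀ 0))
      (nhds (∫ y in Ioc (0 : ℝ) R, y ^ (-(b : ℝ) / a + β))) := by
    apply tendsto_integral_filter_of_dominated_convergence
      (fun y : ℝ => y ^ (-(b : ℝ) / a + β))
    · -- measurability
      apply Eventually.of_forall
      intro σ
      apply ContinuousOn.aestronglyMeasurable _ measurableSet_Ioc
      apply ContinuousOn.mul
      · intro y hy
        exact (Real.continuousAt_rpow_const y _ (Or.inl hy.1.ne')).continuousWithinAt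
      · exact ((epq_continuousOn hp q hq0).mono (fun y hy => hy.1)).rpow_const
          (fun y hy => Or.inl (epq_pos hy.1).ne')
    · -- bound
      filter_upwards [self_mem_nhdsWithin] with σ hσ
      rw [ae_restrict_iff' measurableSet_Ioc]
      apply ae_of_all
      intro y hy
      have hy0 : 0 < y := hy.1
      have hy1 : y ≤ 1 := le_of_lt (lt_of_le_of_lt hy.2 hR1)
      have haσ : -1 < (a : ℝ) * σ := by
        have := hσ.1
        rw [hσ₀def, div_lt_iff₀ ha0] at this
        nlinarith
      have hX : 0 ≤ (a : ℝ) * σ + 1 := by linarith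
      have hble : -(b : ℝ) / a + β ≤ (b : ℝ) * σ + β := by
        have hb0 : (0 : ℝ) ≤ b := Nat.cast_nonneg b
        have h1 : σ₀ ≤ σ := hσ.1.le
        have h2 : (b : ℝ) * σ₀ ≤ (b : ℝ) * σ := mul_le_mul_of_nonneg_left h1 hb0
        have h3 : (b : ℝ) * σ₀ = -(b : ℝ) / a := by rw [hσ₀def]; ring
        linarith
      rw [Real.norm_eq_abs, abs_of_nonneg (mul_nonneg (Real.rpow_nonneg hy0.le _)
        (Real.rpow_nonneg (epq_nonneg p q y) _))]
      calc y ^ ((b : ℝ) * σ + β) * epq p q y ^ ((a : ℝ) * σ + 1)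
          ≤ y ^ (-(b : ℝ) / a + β) * 1 := by
            apply mul_le_mul
            · exact Real.rpow_le_rpow_of_exponent_ge hy0 hy1 hble
            · exact Real.rpow_le_one (epq_nonneg p q y) (epq_lt_one hq0 hy0).le hX
            · exact Real.rpow_nonneg (epq_nonneg p q y) _
            · exact Real.rpow_nonneg hy0.le _
        _ = y ^ (-(b : ℝ) / a + β) := mul_one _
    · exact hbnd_int
    · -- pointwise limit
      rw [ae_restrict_iff' measurableSet_Ioc]
      apply ae_of_all
      intro y hy
      have hy0 : 0 < y := hy.1
      have he : 0 < epq p q y := epq_pos hy0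
      have hcont : ContinuousAt
          (fun σ : ℝ => y ^ ((b : ℝ) * σ + β) * epq p q y ^ ((a : ℝ) * σ + 1)) σ₀ := by
        apply ContinuousAt.mul
        · exact (Real.continuousAt_const_rpow hy0.ne').comp
            (by fun_prop : ContinuousAt (fun σ : ℝ => (b : ℝ) * σ + β) σ₀)
        · exact (Real.continuousAt_const_rpow he.ne').comp
            (by fun_prop : ContinuousAt (fun σ : ℝ => (a : ℝ) * σ + 1) σ₀)
      have := hcont.tendsto.mono_left (nhdsWithin_le_nhds (s := Ioo σ₀ 0))
      have h1 : (a : ℝ) * σ₀ + 1 = 0 := by rw [hσ₀def]; field_simp; ring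
      have h2 : (b : ℝ) * σ₀ + β = -(b : ℝ) / a + β := by rw [hσ₀def]; ring
      rwa [h1, h2, Real.rpow_zero, mul_one] at this
  -- combine
  refine ⟨_, Tendsto.congr' ?_ (hc.mul hI)⟩
  filter_upwards [self_mem_nhdsWithin] with σ hσ
  rw [J1_closed_form a b q ha hq2 hqa p lam r₁ r₂ hlam.1 hR0.le β σ hσ,
    intervalIntegral.integral_of_le hR0.le]
end
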